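/- arXiv:2601.18304 — 5 statements merged into one kernel-verified Lean document; each statement's English description precedes it below -/
import Mathlib

section
/- Let P and Q be Markov kernels on a measurable space (M,𝓕) such that for every x ∈ M, ‖δ_x P^t Q − δ_x Q P^t‖_TV → 0 as t → ∞, and such that there exists c > 0 with Q_x(A) ≤ c · P̃_x(A) for all x ∈ M and A ∈ 𝓕, where P̃ = Σ_{n≥0} 2^{-(n+1)} P^n. Then every bounded P-harmonic function on M is also Q-harmonic. -/
open MeasureTheory Filter ProbabilityTheory
open scoped ENNReal NNReal

noncomputable def tvDist {α : Type*} [MeasurableSpace α] (μ ν : Measure α) : ℝ :=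
  ⨆ A : Set α, |(μ A).toReal - (ν A).toReal|

/-- Iterates of a Markov kernel: `kpow P t x` is the law `δ_x P^t`. -/
noncomputable def kpow {M : Type*} [MeasurableSpace M] (P : Kernel M M) : ℕ → Kernel M M
  | 0 => Kernel.id
  | n+1 => Kernel.comp P (kpow P n)

/-- `P̃ = Σ_{n≥0} 2^{-(n+1)} P^n` applied at `x`. -/
noncomputable def ktilde {M : Type*} [MeasurableSpace M] (P : Kernel M M) (x : M) : Measure M :=
  Measure.sum (fun n => ((2:ℝ≥0∞)^(n+1))⁻¹ • (kpow P n) x)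

section StmtAux

open Set

variable {M : Type*} [MeasurableSpace M]

instance stmt2_kpow_markov (P : Kernel M M) [IsMarkovKernel P] :
    ∀ n, IsMarkovKernel (kpow P n)
  | 0 => by rw [kpow]; infer_instance
  | (n+1) => by
      have := stmt2_kpow_markov P n
      rw [kpow]; infer_instance

lemma stmt2_kpow_comm (P : Kernel M M) [IsMarkovKernel P] (n : ℕ) :
    Kernel.comp P (kpow P n) = Kernel.comp (kpow P n) P := by
  induction n with
  | zero => rw [kpow, Kernel.comp_id, Kernel.id_comp]
  | succ n ih =>
      rw [kpow]
      calc P ∘ₖ (P ∘ₖ kpow P n) = P ∘ₖ (kpow P n ∘ₖ P) := by rw [← ih]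
      _ = (P ∘ₖ kpow P n) ∘ₖ P := by rw [Kernel.comp_assoc]

lemma stmt2_kpow_succ_apply' (P : Kernel M M) [IsMarkovKernel P] (n : ℕ) (x : M) :
    kpow P (n+1) x = (P x).bind ⇑(kpow P n) := by
  have : kpow P (n+1) = Kernel.comp (kpow P n) P := by rw [kpow, stmt2_kpow_comm]
  rw [this, Kernel.comp_apply]

lemma stmt2_integrable_of_bdd {f : M → ℝ} {C : ℝ} (hm : Measurable f) (hC : ∀ x, |f x| ≤ C)
    (μ : Measure M) [IsFiniteMeasure μ] : Integrable f μ :=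
  Integrable.mono' (integrable_const C) hm.aestronglyMeasurable
    (ae_of_all _ fun x => by simpa [Real.norm_eq_abs] using hC x)

lemma stmt2_measurable_kint (κ : Kernel M M) [IsSFiniteKernel κ] {f : M → ℝ}
    (hm : Measurable f) : Measurable (fun x => ∫ y, f y ∂κ x) := by
  have h1 : StronglyMeasurable (Function.uncurry fun (_ : M) y => f y) :=
    (hm.comp measurable_snd).stronglyMeasurable
  exact (h1.integral_kernel_prod_right (κ := κ)).measurable

lemma stmt2_kint_bdd {κ : Kernel M M} [IsMarkovKernel κ] {f : M → ℝ} {C : ℝ}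
    (hC : ∀ x, |f x| ≤ C) (x : M) : |∫ y, f y ∂κ x| ≤ C := by
  have := norm_integral_le_of_norm_le_const (μ := κ x) (f := f) (C := C)
    (ae_of_all _ fun y => by simpa [Real.norm_eq_abs] using hC y)
  simpa [Real.norm_eq_abs] using this

instance stmt2_isProb_bind (μ : Measure M) [IsProbabilityMeasure μ] (κ : Kernel M M)
    [IsMarkovKernel κ] : IsProbabilityMeasure (μ.bind ⇑κ) := by
  constructor
  rw [Measure.bind_apply MeasurableSet.univ (Kernel.measurable κ).aemeasurable]
  simp

lemma stmt2_integral_bind_kernel {f : M → ℝ} {C : ℝ} (hm : Measurable f) (hC : ∀ x, |f x| ≤ C)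
    (μ : Measure M) [IsProbabilityMeasure μ] (κ : Kernel M M) [IsMarkovKernel κ] :
    ∫ y, f y ∂(μ.bind ⇑κ) = ∫ x, ∫ y, f y ∂(κ x) ∂μ := by
  set g : M → ℝ := fun y => f y + C with hg
  have hgm : Measurable g := hm.add_const C
  have hgnn : ∀ y, 0 ≤ g y := fun y => by
    have := (abs_le.1 (hC y)).1; simp [hg]; linarith
  have hgb : ∀ y, g y ≤ 2*C := fun y => by
    have := (abs_le.1 (hC y)).2; simp [hg]; linarith
  have hOm : Measurable fun y => ENNReal.ofReal (g y) := hgm.ennreal_ofReal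
  have key : ∫⁻ y, ENNReal.ofReal (g y) ∂(μ.bind ⇑κ)
      = ∫⁻ x, ∫⁻ y, ENNReal.ofReal (g y) ∂(κ x) ∂μ :=
    Measure.lintegral_bind (Kernel.measurable κ).aemeasurable hOm.aemeasurable
  have hfin : ∀ x : M, (∫⁻ y, ENNReal.ofReal (g y) ∂(κ x)) ≤ ENNReal.ofReal (2*C) := by
    intro x
    calc ∫⁻ y, ENNReal.ofReal (g y) ∂(κ x) ≤ ∫⁻ _, ENNReal.ofReal (2*C) ∂(κ x) :=
          lintegral_mono fun y => ENNReal.ofReal_le_ofReal (hgb y)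
    _ = ENNReal.ofReal (2*C) := by simp
  have hFm : Measurable fun x => ∫⁻ y, ENNReal.ofReal (g y) ∂(κ x) := by
    have : Measurable (Function.uncurry fun (_ : M) y => ENNReal.ofReal (g y)) :=
      hOm.comp measurable_snd
    exact this.lintegral_kernel_prod_right
  have hg_eq : ∀ (ν : Measure M) [IsProbabilityMeasure ν],
      ∫ y, g y ∂ν = (∫⁻ y, ENNReal.ofReal (g y) ∂ν).toReal := by
    intro ν _
    rw [integral_eq_lintegral_of_nonneg_ae (ae_of_all _ hgnn) hgm.aestronglyMeasurable]
  have step1 : ∫ y, g y ∂(μ.bind ⇑κ) = ∫ x, ∫ y, g y ∂(κ x) ∂μ := by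
    rw [hg_eq _, key]
    rw [← integral_toReal (hFm.aemeasurable)
      (ae_of_all _ fun x => lt_of_le_of_lt (hfin x) ENNReal.ofReal_lt_top)]
    exact integral_congr_ae (ae_of_all _ fun x => (hg_eq (κ x)).symm)
  have hfint : ∀ (ν : Measure M) [IsProbabilityMeasure ν], Integrable f ν := by
    intro ν _
    exact stmt2_integrable_of_bdd hm hC ν
  have hsplit : ∀ (ν : Measure M) [IsProbabilityMeasure ν],
      ∫ y, g y ∂ν = (∫ y, f y ∂ν) + C := by
    intro ν _
    rw [hg, integral_add (hfint ν) (integrable_const C)]; simp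
  rw [hsplit] at step1
  have hmi : Measurable fun x => ∫ y, f y ∂(κ x) := stmt2_measurable_kint κ hm
  have hib : ∀ x, |∫ y, f y ∂(κ x)| ≤ C := fun x => stmt2_kint_bdd hC x
  have : ∫ x, ∫ y, g y ∂(κ x) ∂μ = (∫ x, ∫ y, f y ∂(κ x) ∂μ) + C := by
    have : (fun x => ∫ y, g y ∂(κ x)) = fun x => (∫ y, f y ∂(κ x)) + C := by
      funext x; exact hsplit (κ x)
    rw [this, integral_add (stmt2_integrable_of_bdd hmi hib μ) (integrable_const C)]
    simp
  rw [this] at step1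
  linarith

lemma stmt2_tvDist_bddAbove (μ ν : Measure M) [IsProbabilityMeasure μ]
    [IsProbabilityMeasure ν] :
    BddAbove (Set.range fun A : Set M => |(μ A).toReal - (ν A).toReal|) := by
  refine ⟨2, ?_⟩
  rintro r ⟨A, rfl⟩
  have h1 : (μ A).toReal ≤ 1 := by
    have := measure_mono (subset_univ A) (μ := μ)
    simpa using ENNReal.toReal_mono (by simp) this
  have h2 : (ν A).toReal ≤ 1 := by
    have := measure_mono (subset_univ A) (μ := ν)
    simpa using ENNReal.toReal_mono (by simp) this
  have h3 : (0:ℝ) ≤ (μ A).toReal := ENNReal.toReal_nonneg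
  have h4 : (0:ℝ) ≤ (ν A).toReal := ENNReal.toReal_nonneg
  rw [abs_le]; constructor <;> linarith

lemma stmt2_le_tvDist (μ ν : Measure M) [IsProbabilityMeasure μ] [IsProbabilityMeasure ν]
    (A : Set M) : |(μ A).toReal - (ν A).toReal| ≤ tvDist μ ν :=
  le_ciSup (stmt2_tvDist_bddAbove μ ν) A

lemma stmt2_abs_integral_sub_le_tv (μ ν : Measure M) [IsProbabilityMeasure μ]
    [IsProbabilityMeasure ν] {f : M → ℝ} {C : ℝ} (hm : Measurable f) (hC : ∀ x, |f x| ≤ C) :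
    |(∫ y, f y ∂μ) - ∫ y, f y ∂ν| ≤ 2*C * tvDist μ ν := by
  have hne : Nonempty M := by
    by_contra hn
    rw [not_nonempty_iff] at hn
    have h1 := measure_univ (μ := μ)
    rw [Set.univ_eq_empty_iff.mpr hn, measure_empty] at h1
    exact zero_ne_one h1
  have hC0 : 0 ≤ C := (abs_nonneg _).trans (hC (Classical.ofNonempty (α := M)))
  set g : M → ℝ := fun y => f y + C with hgdef
  have hgm : Measurable g := hm.add_const C
  have hgnn : ∀ y, 0 ≤ g y := fun y => by
    have := (abs_le.1 (hC y)).1; simp [hgdef]; linarith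
  have hgb : ∀ y, g y ≤ 2*C := fun y => by
    have := (abs_le.1 (hC y)).2; simp [hgdef]; linarith
  have hint : ∀ (ρ : Measure M) [IsProbabilityMeasure ρ], Integrable g ρ := by
    intro ρ _
    exact Integrable.mono' (integrable_const (2*C)) hgm.aestronglyMeasurable
      (ae_of_all _ fun x => by
        rw [Real.norm_eq_abs, abs_of_nonneg (hgnn x)]; exact hgb x)
  set F : ℝ → ℝ := fun t => (μ {a | t < g a}).toReal with hFdef
  set G : ℝ → ℝ := fun t => (ν {a | t < g a}).toReal with hGdef
  have layerμ : ∫ y, g y ∂μ = ∫ t in Ioi (0:ℝ), F t :=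
    (hint μ).integral_eq_integral_meas_lt (ae_of_all _ hgnn)
  have layerν : ∫ y, g y ∂ν = ∫ t in Ioi (0:ℝ), G t :=
    (hint ν).integral_eq_integral_meas_lt (ae_of_all _ hgnn)
  have hFmono : ∀ (ρ : Measure M), Antitone (fun t => ρ {a | t < g a}) :=
    fun ρ s t hst => measure_mono (fun a ha => lt_of_le_of_lt hst ha)
  have hzero : ∀ t, 2*C ≤ t → {a | t < g a} = (∅ : Set M) := by
    intro t ht
    ext a; simp only [mem_setOf_eq, mem_empty_iff_false, iff_false, not_lt]
    exact (hgb a).trans ht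
  have hF01 : ∀ (ρ : Measure M) [IsProbabilityMeasure ρ], ∀ t : ℝ,
      (ρ {a | t < g a}).toReal ≤ 1 := by
    intro ρ _ t
    have := measure_mono (subset_univ {a | t < g a}) (μ := ρ)
    simpa using ENNReal.toReal_mono (by simp) this
  have hFint : ∀ (ρ : Measure M) [IsProbabilityMeasure ρ],
      IntegrableOn (fun t => (ρ {a | t < g a}).toReal) (Ioi (0:ℝ)) := by
    intro ρ _
    refine Integrable.mono' (g := (Ioc (0:ℝ) (2*C)).indicator (fun _ => (1:ℝ)))
      ((integrable_indicator_iff measurableSet_Ioc).2 ?_)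
      (((hFmono ρ).measurable).ennreal_toReal).aestronglyMeasurable
      ((ae_restrict_iff' measurableSet_Ioi).2 (ae_of_all _ fun t ht => ?_))
    · exact integrableOn_const measure_Ioc_lt_top.ne
    · rw [Real.norm_eq_abs, abs_of_nonneg ENNReal.toReal_nonneg]
      rcases le_or_gt t (2*C) with h' | h'
      · have htm : t ∈ Ioc (0:ℝ) (2*C) := ⟨ht, h'⟩
        rw [indicator_of_mem htm]; exact hF01 ρ t
      · rw [indicator_of_notMem (by simp [h'.not_ge] : t ∉ Ioc (0:ℝ) (2*C)),
          hzero t h'.le, measure_empty]; simp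
  have hFGint : Integrable (fun t => F t - G t) (volume.restrict (Ioi (0:ℝ))) :=
    (hFint μ).sub (hFint ν)
  have hIndInt : Integrable ((Ioc (0:ℝ) (2*C)).indicator (fun _ => tvDist μ ν))
      (volume.restrict (Ioi (0:ℝ))) :=
    (integrable_indicator_iff measurableSet_Ioc).2
      (integrableOn_const measure_Ioc_lt_top.ne)
  have hptwise : ∀ᵐ t ∂(volume.restrict (Ioi (0:ℝ))),
      |F t - G t| ≤ (Ioc (0:ℝ) (2*C)).indicator (fun _ => tvDist μ ν) t := by
    refine (ae_restrict_iff' measurableSet_Ioi).2 (ae_of_all _ fun t ht => ?_)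
    rcases le_or_gt t (2*C) with h' | h'
    · have htm : t ∈ Ioc (0:ℝ) (2*C) := ⟨ht, h'⟩
      rw [indicator_of_mem htm]
      exact stmt2_le_tvDist μ ν {a | t < g a}
    · rw [indicator_of_notMem (by simp [h'.not_ge] : t ∉ Ioc (0:ℝ) (2*C)),
        hFdef, hGdef]
      simp only [hzero t h'.le, measure_empty]
      simp
  have hind_val : ∫ t in Ioi (0:ℝ), (Ioc (0:ℝ) (2*C)).indicator (fun _ => tvDist μ ν) t
      = 2*C * tvDist μ ν := by
    rw [integral_indicator measurableSet_Ioc]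
    rw [Measure.restrict_restrict measurableSet_Ioc]
    rw [inter_eq_left.2 (Ioc_subset_Ioi_self)]
    rw [setIntegral_const]
    rw [measureReal_def, Real.volume_Ioc]
    rw [smul_eq_mul, ENNReal.toReal_ofReal (by linarith)]
    ring
  have hmain : |(∫ t in Ioi (0:ℝ), F t) - ∫ t in Ioi (0:ℝ), G t| ≤ 2*C * tvDist μ ν := by
    rw [← integral_sub (hFint μ) (hFint ν)]
    calc |∫ t in Ioi (0:ℝ), (F t - G t)| ≤ ∫ t in Ioi (0:ℝ), |F t - G t| := by
          simpa [Real.norm_eq_abs] using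
            norm_integral_le_integral_norm (μ := volume.restrict (Ioi (0:ℝ)))
              (fun t => F t - G t)
    _ ≤ ∫ t in Ioi (0:ℝ), (Ioc (0:ℝ) (2*C)).indicator (fun _ => tvDist μ ν) t :=
          integral_mono_ae hFGint.abs hIndInt hptwise
    _ = 2*C * tvDist μ ν := hind_val
  have hfint : ∀ (ρ : Measure M) [IsProbabilityMeasure ρ], Integrable f ρ := by
    intro ρ _
    exact stmt2_integrable_of_bdd hm hC ρ
  have hsplit : ∀ (ρ : Measure M) [IsProbabilityMeasure ρ],
      ∫ y, g y ∂ρ = (∫ y, f y ∂ρ) + C := by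
    intro ρ _
    rw [hgdef, integral_add (hfint ρ) (integrable_const C)]; simp
  have e1 := hsplit μ
  have e2 := hsplit ν
  rw [layerμ] at e1
  rw [layerν] at e2
  have : (∫ y, f y ∂μ) - ∫ y, f y ∂ν
      = (∫ t in Ioi (0:ℝ), F t) - ∫ t in Ioi (0:ℝ), G t := by linarith
  rw [this]
  exact hmain

lemma stmt2_tsum_pow_two_inv : ∑' n : ℕ, ((2:ℝ≥0∞)^(n+1))⁻¹ = 1 := by
  have h1 : ∀ n : ℕ, ((2:ℝ≥0∞)^(n+1))⁻¹ = (2⁻¹ : ℝ≥0∞)^(n+1) := fun n => ENNReal.inv_pow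
  calc ∑' n : ℕ, ((2:ℝ≥0∞)^(n+1))⁻¹ = ∑' n : ℕ, (2⁻¹ : ℝ≥0∞)^(n+1) := tsum_congr h1
  _ = 2⁻¹ * (1 - 2⁻¹)⁻¹ := ENNReal.tsum_geometric_add_one 2⁻¹
  _ = 1 := by
      rw [ENNReal.one_sub_inv_two, inv_inv]
      exact ENNReal.inv_mul_cancel two_ne_zero ENNReal.ofNat_ne_top

lemma stmt2_meas_sublevel_le {ν : Measure M} [IsProbabilityMeasure ν] {f : M → ℝ} {s ε δ : ℝ}
    (hm : Measurable f) {B : ℝ} (hB : ∀ x, |f x| ≤ B) (hs : ∀ x, f x ≤ s)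
    (hδ0 : 0 < δ) (hint : s - ε ≤ ∫ y, f y ∂ν) :
    (ν {y | f y ≤ s - δ}).toReal ≤ ε / δ := by
  set A : Set M := {y | f y ≤ s - δ} with hAdef
  have hA : MeasurableSet A := hm measurableSet_Iic
  have hfi : Integrable f ν := stmt2_integrable_of_bdd hm hB ν
  have hsum : (ν A).toReal + (ν Aᶜ).toReal = 1 := by
    have h := measure_add_measure_compl hA (μ := ν)
    have := congrArg ENNReal.toReal h
    rwa [ENNReal.toReal_add (measure_ne_top ν A) (measure_ne_top ν Aᶜ),
      measure_univ, ENNReal.toReal_one] at this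
  have h1 : ∫ y in A, f y ∂ν ≤ (s - δ) * (ν A).toReal := by
    have := setIntegral_mono_on hfi.integrableOn
      (integrableOn_const (measure_ne_top ν A)) hA
      (fun y hy => (hy : f y ≤ s - δ))
    rwa [setIntegral_const, smul_eq_mul, mul_comm] at this
  have h2 : ∫ y in Aᶜ, f y ∂ν ≤ s * (ν Aᶜ).toReal := by
    have := setIntegral_mono_on hfi.integrableOn
      (integrableOn_const (measure_ne_top ν Aᶜ)) hA.compl
      (fun y _ => hs y)
    rwa [setIntegral_const, smul_eq_mul, mul_comm] at this
  have hsplit : ∫ y, f y ∂ν = (∫ y in A, f y ∂ν) + ∫ y in Aᶜ, f y ∂ν :=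
    (integral_add_compl hA hfi).symm
  have ha0 : (0:ℝ) ≤ (ν A).toReal := ENNReal.toReal_nonneg
  have hcc : (ν Aᶜ).toReal = 1 - (ν A).toReal := by linarith
  rw [hcc] at h2
  have key : δ * (ν A).toReal ≤ ε := by nlinarith [hsplit, h1, h2, hint]
  rw [le_div_iff₀ hδ0]
  linarith [key]

lemma stmt2_harm_kpow_integral {P : Kernel M M} [IsMarkovKernel P] {f : M → ℝ} {C : ℝ}
    (hm : Measurable f) (hC : ∀ x, |f x| ≤ C) (hf : ∀ x, f x = ∫ y, f y ∂P x) :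
    ∀ t x, ∫ y, f y ∂(kpow P t x) = f x := by
  intro t
  induction t with
  | zero =>
      intro x
      rw [show kpow P 0 = Kernel.id from rfl, Kernel.id_apply,
        integral_dirac' _ _ hm.stronglyMeasurable]
  | succ t ih =>
      intro x
      rw [show kpow P (t+1) x = ((kpow P t) x).bind ⇑P from by rw [kpow, Kernel.comp_apply]]
      rw [stmt2_integral_bind_kernel hm hC ((kpow P t) x) P]
      have : (fun x' => ∫ y, f y ∂P x') = f := funext fun x' => (hf x').symm
      rw [this, ih x]

lemma stmt2_harm_step {P Q : Kernel M M} [IsMarkovKernel P] [IsMarkovKernel Q]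
    {c : ℝ≥0} (hdom : ∀ x A, Q x A ≤ (c:ℝ≥0∞) * ktilde P x A)
    {f : M → ℝ} {B s ε δ : ℝ} (hm : Measurable f) (hB : ∀ x, |f x| ≤ B)
    (hf : ∀ x, f x = ∫ y, f y ∂P x) (hs : ∀ x, f x ≤ s)
    (hδ0 : 0 < δ) (hδs : δ ≤ s) (hε : 0 < ε) (x₀ : M) (hx₀ : s - ε ≤ f x₀) :
    s - δ - ((c:ℝ) * (ε / δ)) * (B + s) ≤ ∫ y, f y ∂Q x₀ := by
  set A : Set M := {y | f y ≤ s - δ} with hAdef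
  have hA : MeasurableSet A := hm measurableSet_Iic
  have hB0 : 0 ≤ B := (abs_nonneg _).trans (hB x₀)
  have hμn : ∀ n : ℕ, ((kpow P n) x₀ A).toReal ≤ ε / δ := by
    intro n
    refine stmt2_meas_sublevel_le (ν := (kpow P n) x₀) hm hB hs hδ0 ?_
    rw [stmt2_harm_kpow_integral hm hB hf n x₀]
    exact hx₀
  have hofn : ∀ n : ℕ, (kpow P n) x₀ A ≤ ENNReal.ofReal (ε / δ) := fun n =>
    (ENNReal.le_ofReal_iff_toReal_le (measure_ne_top _ _)
      (div_nonneg hε.le hδ0.le)).2 (hμn n)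
  have hkt : ktilde P x₀ A ≤ ENNReal.ofReal (ε / δ) := by
    rw [ktilde, Measure.sum_apply _ hA]
    calc ∑' n, (((2:ℝ≥0∞)^(n+1))⁻¹ • (kpow P n) x₀) A
        = ∑' n, ((2:ℝ≥0∞)^(n+1))⁻¹ * (kpow P n) x₀ A := by
          simp [Measure.smul_apply, smul_eq_mul]
    _ ≤ ∑' n, ((2:ℝ≥0∞)^(n+1))⁻¹ * ENNReal.ofReal (ε / δ) :=
          ENNReal.tsum_le_tsum fun n => mul_le_mul_right (hofn n) _
    _ = (∑' n : ℕ, ((2:ℝ≥0∞)^(n+1))⁻¹) * ENNReal.ofReal (ε / δ) := ENNReal.tsum_mul_right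
    _ = ENNReal.ofReal (ε / δ) := by rw [stmt2_tsum_pow_two_inv, one_mul]
  have hQA : Q x₀ A ≤ (c:ℝ≥0∞) * ENNReal.ofReal (ε / δ) :=
    (hdom x₀ A).trans (mul_le_mul_right hkt _)
  have hq : (Q x₀ A).toReal ≤ (c:ℝ) * (ε / δ) := by
    have h1 := ENNReal.toReal_mono
      (ENNReal.mul_ne_top ENNReal.coe_ne_top ENNReal.ofReal_ne_top) hQA
    rwa [ENNReal.toReal_mul, ENNReal.coe_toReal,
      ENNReal.toReal_ofReal (div_nonneg hε.le hδ0.le)] at h1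
  set q : ℝ := (Q x₀ A).toReal with hqdef
  have hq0 : 0 ≤ q := ENNReal.toReal_nonneg
  have hfi : Integrable f (Q x₀) := stmt2_integrable_of_bdd hm hB (Q x₀)
  have hsum : q + ((Q x₀) Aᶜ).toReal = 1 := by
    have h := measure_add_measure_compl hA (μ := Q x₀)
    have := congrArg ENNReal.toReal h
    rwa [ENNReal.toReal_add (measure_ne_top _ A) (measure_ne_top _ Aᶜ),
      measure_univ, ENNReal.toReal_one] at this
  have h1 : (-B) * q ≤ ∫ y in A, f y ∂(Q x₀) := by
    have := setIntegral_mono_on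
      (integrableOn_const (measure_ne_top (Q x₀) A)) hfi.integrableOn hA
      (fun y _ => (abs_le.1 (hB y)).1)
    rwa [setIntegral_const, smul_eq_mul, mul_comm] at this
  have h2 : (s - δ) * ((Q x₀) Aᶜ).toReal ≤ ∫ y in Aᶜ, f y ∂(Q x₀) := by
    have := setIntegral_mono_on
      (integrableOn_const (measure_ne_top (Q x₀) Aᶜ)) hfi.integrableOn hA.compl
      (fun y hy => le_of_not_ge (fun hle => hy hle))
    rwa [setIntegral_const, smul_eq_mul, mul_comm] at this
  have hsplit : ∫ y, f y ∂(Q x₀) = (∫ y in A, f y ∂(Q x₀)) + ∫ y in Aᶜ, f y ∂(Q x₀) :=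
    (integral_add_compl hA hfi).symm
  have hqc : ((Q x₀) Aᶜ).toReal = 1 - q := by linarith
  rw [hqc] at h2
  have expand : (-B) * q + (s - δ) * (1 - q) = s - δ - q * (B + s - δ) := by ring
  have hfinal : s - δ - ((c:ℝ) * (ε / δ)) * (B + s) ≤ (-B) * q + (s - δ) * (1 - q) := by
    rw [expand]
    have hqd : 0 ≤ q * δ := mul_nonneg hq0 hδ0.le
    have h3 : q * (B + s - δ) ≤ q * (B + s) := by nlinarith
    have h4 : q * (B + s) ≤ ((c:ℝ) * (ε / δ)) * (B + s) :=
      mul_le_mul_of_nonneg_right hq (by linarith)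
    linarith
  linarith [h1, h2, hsplit, hfinal]


lemma stmt2_qconv {P Q : Kernel M M} [IsMarkovKernel P] [IsMarkovKernel Q]
    (htv : ∀ x : M, Tendsto
      (fun t => tvDist (((kpow P t) x).bind (⇑Q)) ((Q x).bind (⇑(kpow P t)))) atTop (nhds 0))
    {f : M → ℝ} {C : ℝ} (hm : Measurable f) (hC : ∀ x, |f x| ≤ C)
    (hf : ∀ x, f x = ∫ y, f y ∂P x) (z : M) :
    Tendsto (fun t => ∫ y, (∫ w, f w ∂Q y) ∂((kpow P t) z)) atTop
      (nhds (∫ w, f w ∂Q z)) := by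
  have e1 : ∀ t, ∫ y, (∫ w, f w ∂Q y) ∂((kpow P t) z)
      = ∫ w, f w ∂(((kpow P t) z).bind ⇑Q) := fun t =>
    (stmt2_integral_bind_kernel hm hC ((kpow P t) z) Q).symm
  have e2 : ∀ t, ∫ w, f w ∂((Q z).bind ⇑(kpow P t)) = ∫ w, f w ∂Q z := by
    intro t
    rw [stmt2_integral_bind_kernel hm hC (Q z) (kpow P t)]
    have : (fun x' => ∫ y, f y ∂(kpow P t) x') = f :=
      funext fun x' => stmt2_harm_kpow_integral hm hC hf t x'
    rw [this]
  have hb : ∀ t, |(∫ y, (∫ w, f w ∂Q y) ∂((kpow P t) z)) - ∫ w, f w ∂Q z|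
      ≤ 2*C * tvDist (((kpow P t) z).bind ⇑Q) ((Q z).bind ⇑(kpow P t)) := by
    intro t
    rw [e1 t, ← e2 t]
    exact stmt2_abs_integral_sub_le_tv _ _ hm hC
  have hlim : Tendsto (fun t => 2*C * tvDist (((kpow P t) z).bind ⇑Q)
      ((Q z).bind ⇑(kpow P t))) atTop (nhds 0) := by
    have := (htv z).const_mul (2*C)
    simpa using this
  rw [← tendsto_sub_nhds_zero_iff]
  exact squeeze_zero_norm (fun t => by simpa [Real.norm_eq_abs] using hb t) hlim

lemma stmt2_qharm {P Q : Kernel M M} [IsMarkovKernel P] [IsMarkovKernel Q]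
    (htv : ∀ x : M, Tendsto
      (fun t => tvDist (((kpow P t) x).bind (⇑Q)) ((Q x).bind (⇑(kpow P t)))) atTop (nhds 0))
    {f : M → ℝ} {C : ℝ} (hm : Measurable f) (hC : ∀ x, |f x| ≤ C)
    (hf : ∀ x, f x = ∫ y, f y ∂P x) :
    ∀ x, (∫ w, f w ∂Q x) = ∫ x', (∫ w, f w ∂Q x') ∂P x := by
  intro x
  set g : M → ℝ := fun y => ∫ w, f w ∂Q y with hgdef
  have gm : Measurable g := stmt2_measurable_kint Q hm
  have gb : ∀ y, |g y| ≤ C := fun y => stmt2_kint_bdd hC y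
  have conv : ∀ z : M, Tendsto (fun t => ∫ y, g y ∂((kpow P t) z)) atTop (nhds (g z)) :=
    fun z => stmt2_qconv htv hm hC hf z
  have h1 : Tendsto (fun t => ∫ z, (∫ y, g y ∂((kpow P t) z)) ∂P x) atTop
      (nhds (∫ z, g z ∂P x)) := by
    refine tendsto_integral_of_dominated_convergence (fun _ => C)
      (fun t => (stmt2_measurable_kint (kpow P t) gm).aestronglyMeasurable)
      (integrable_const C) (fun t => ae_of_all _ fun z => ?_)
      (ae_of_all _ fun z => conv z)
    simpa [Real.norm_eq_abs] using stmt2_kint_bdd gb z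
  have h2 : ∀ t, ∫ z, (∫ y, g y ∂((kpow P t) z)) ∂P x = ∫ y, g y ∂((kpow P (t+1)) x) := by
    intro t
    rw [stmt2_kpow_succ_apply' P t x, stmt2_integral_bind_kernel gm gb (P x) (kpow P t)]
  have h3 : Tendsto (fun t => ∫ y, g y ∂((kpow P (t+1)) x)) atTop (nhds (g x)) :=
    (conv x).comp (tendsto_add_atTop_nat 1)
  rw [funext h2] at h1
  exact tendsto_nhds_unique h3 h1

lemma stmt2_one_sided {P Q : Kernel M M} [IsMarkovKernel P] [IsMarkovKernel Q]
    (htv : ∀ x : M, Tendsto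
      (fun t => tvDist (((kpow P t) x).bind (⇑Q)) ((Q x).bind (⇑(kpow P t)))) atTop (nhds 0))
    {c : ℝ≥0} (hdom : ∀ x A, Q x A ≤ (c:ℝ≥0∞) * ktilde P x A)
    {h : M → ℝ} {C : ℝ} (hm : Measurable h) (hC : ∀ x, |h x| ≤ C)
    (hharm : ∀ x, h x = ∫ y, h y ∂P x) :
    ∀ x, h x ≤ ∫ y, h y ∂Q x := by
  by_contra hcon
  push_neg at hcon
  obtain ⟨x₁, hx₁⟩ := hcon
  have hC0 : 0 ≤ C := (abs_nonneg _).trans (hC x₁)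
  set T : (M → ℝ) → (M → ℝ) := fun f x => ∫ y, f y ∂Q x with hTdef
  set B : ℝ := 2*C with hBdef
  set u : M → ℝ := fun x => h x - T h x with hudef
  have hThm : Measurable (T h) := stmt2_measurable_kint Q hm
  have hThb : ∀ x, |T h x| ≤ C := fun x => stmt2_kint_bdd hC x
  have hThharm : ∀ x, T h x = ∫ y, T h y ∂P x := stmt2_qharm htv hm hC hharm
  have hum : Measurable u := hm.sub hThm
  have hub : ∀ x, |u x| ≤ B := by
    intro x
    have := abs_sub (h x) (T h x)
    calc |u x| ≤ |h x| + |T h x| := abs_sub _ _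
    _ ≤ C + C := add_le_add (hC x) (hThb x)
    _ = B := by rw [hBdef]; ring
  have huharm : ∀ x, u x = ∫ y, u y ∂P x := by
    intro x
    rw [hudef]
    simp only
    rw [integral_sub (stmt2_integrable_of_bdd hm hC (P x))
      (stmt2_integrable_of_bdd hThm hThb (P x))]
    rw [← hharm x, ← hThharm x]
  -- the sup
  have hbdd : BddAbove (Set.range u) := ⟨B, by rintro r ⟨y, rfl⟩; exact (abs_le.1 (hub y)).2⟩
  set s : ℝ := sSup (Set.range u) with hsdef
  have hus : ∀ x, u x ≤ s := fun x => le_csSup hbdd (Set.mem_range_self x)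
  have hspos : 0 < s := by
    have h1 : 0 < u x₁ := by rw [hudef]; simp only [hTdef]; linarith
    exact lt_of_lt_of_le h1 (le_csSup hbdd (Set.mem_range_self x₁))
  have hB0 : 0 ≤ B := by rw [hBdef]; linarith
  have hsB : s ≤ B := csSup_le ⟨u x₁, Set.mem_range_self x₁⟩
    (by rintro r ⟨y, rfl⟩; exact (abs_le.1 (hub y)).2)
  -- properties of iterates
  have hiter : ∀ k : ℕ, Measurable (T^[k] u) ∧ (∀ x, |T^[k] u x| ≤ B)
      ∧ (∀ x, T^[k] u x = ∫ y, T^[k] u y ∂P x) ∧ (∀ x, T^[k] u x ≤ s)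
      ∧ (∀ x, T^[k] u x = T^[k] h x - T^[k+1] h x)
      ∧ Measurable (T^[k] h) ∧ (∀ x, |T^[k] h x| ≤ C) := by
    intro k
    induction k with
    | zero => exact ⟨hum, hub, huharm, hus, fun x => by simp [hudef, hTdef], hm, hC⟩
    | succ k ih =>
        obtain ⟨ihm, ihb, ihharm, ihs, ihtel, ihHm, ihHb⟩ := ih
        have e1 : T^[k+1] u = T (T^[k] u) := Function.iterate_succ_apply' T k u
        have e2 : T^[k+1] h = T (T^[k] h) := Function.iterate_succ_apply' T k h
        have e3 : T^[k+2] h = T (T^[k+1] h) := Function.iterate_succ_apply' T (k+1) h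
        have hm' : Measurable (T^[k+1] u) := by
          rw [e1]; exact stmt2_measurable_kint Q ihm
        have hb' : ∀ x, |T^[k+1] u x| ≤ B := by
          intro x; rw [e1]; exact stmt2_kint_bdd ihb x
        have hharm' : ∀ x, T^[k+1] u x = ∫ y, T^[k+1] u y ∂P x := by
          rw [e1]; exact stmt2_qharm htv ihm ihb ihharm
        have hs' : ∀ x, T^[k+1] u x ≤ s := by
          intro x
          rw [e1]
          calc T (T^[k] u) x = ∫ y, T^[k] u y ∂Q x := rfl
          _ ≤ ∫ _, s ∂Q x := integral_mono (stmt2_integrable_of_bdd ihm ihb (Q x))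
                (integrable_const s) ihs
          _ = s := by simp
        have hHm' : Measurable (T^[k+1] h) := by
          rw [e2]; exact stmt2_measurable_kint Q ihHm
        have hHb' : ∀ x, |T^[k+1] h x| ≤ C := by
          intro x; rw [e2]; exact stmt2_kint_bdd ihHb x
        have htel' : ∀ x, T^[k+1] u x = T^[k+1] h x - T^[k+2] h x := by
          intro x
          rw [e1, e3]
          have : T^[k] u = fun y => T^[k] h y - T^[k+1] h y := funext ihtel
          calc T (T^[k] u) x = ∫ y, (T^[k] h y - T^[k+1] h y) ∂Q x := by rw [this]
          _ = (∫ y, T^[k] h y ∂Q x) - ∫ y, T^[k+1] h y ∂Q x :=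
                integral_sub (stmt2_integrable_of_bdd ihHm ihHb (Q x))
                  (stmt2_integrable_of_bdd hHm' hHb' (Q x))
          _ = T^[k+1] h x - T (T^[k+1] h) x := by rw [e2]
        exact ⟨hm', hb', hharm', hs', htel', hHm', hHb'⟩
  -- the error sequence
  set D : ℝ := (c:ℝ) * (B + s) + 1 with hDdef
  have hD1 : 1 ≤ D := by
    have : 0 ≤ (c:ℝ) * (B + s) := mul_nonneg c.coe_nonneg (by linarith)
    linarith
  have hD0 : 0 < D := by linarith
  set eps : ℝ → ℝ := fun γ => γ*γ/(4*D) with hepsdef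
  have hepspos : ∀ γ, 0 < γ → 0 < eps γ := fun γ hγ => by
    rw [hepsdef]; positivity
  set η : ℕ → ℝ := fun j => Nat.rec (s/2) (fun _ prev => min prev (eps prev)) j with hηdef
  have hη0 : η 0 = s/2 := rfl
  have hηsucc : ∀ j, η (j+1) = min (η j) (eps (η j)) := fun j => rfl
  have hηpos : ∀ j, 0 < η j := by
    intro j
    induction j with
    | zero => rw [hη0]; linarith
    | succ j ih => rw [hηsucc]; exact lt_min ih (hepspos _ ih)
  have hηmono : ∀ j, η (j+1) ≤ η j := fun j => by rw [hηsucc]; exact min_le_left _ _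
  have hηle : ∀ j, η j ≤ s/2 := by
    intro j
    induction j with
    | zero => rw [hη0]
    | succ j ih => exact (hηmono j).trans ih
  -- one improvement step
  have hstep : ∀ (f : M → ℝ), Measurable f → (∀ x, |f x| ≤ B)
      → (∀ x, f x = ∫ y, f y ∂P x) → (∀ x, f x ≤ s)
      → ∀ (j : ℕ) (x₀ : M), s - η (j+1) ≤ f x₀ → s - η j ≤ ∫ y, f y ∂Q x₀ := by
    intro f hfm hfb hfharm hfs j x₀ hx₀
    set γ : ℝ := η j with hγdef
    have hγpos : 0 < γ := hηpos j
    have hγs : γ ≤ s := (hηle j).trans (by linarith)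
    have hδ0 : 0 < γ/2 := by linarith
    have hδs : γ/2 ≤ s := by linarith
    have hεpos : 0 < eps γ := hepspos γ hγpos
    have hx₀' : s - eps γ ≤ f x₀ := by
      have : η (j+1) ≤ eps γ := by rw [hηsucc]; exact min_le_right _ _
      linarith
    have hmain := stmt2_harm_step hdom hfm hfb hfharm hfs hδ0 hδs hεpos x₀ hx₀'
    -- show the error is at most γ
    have herr : (c:ℝ) * (eps γ / (γ/2)) * (B + s) ≤ γ/2 := by
      have heq : eps γ / (γ/2) = γ/(2*D) := by
        rw [hepsdef]
        field_simp
        ring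
      rw [heq]
      have hcd : (c:ℝ) * (B + s) ≤ D := by rw [hDdef]; linarith
      have h5 : (c:ℝ) * (γ/(2*D)) * (B + s) = (γ * ((c:ℝ) * (B + s)))/(2*D) := by ring
      have h6 : γ/2 = (γ * D)/(2*D) := by field_simp
      rw [h5, h6]
      apply div_le_div_of_nonneg_right ?_ (by positivity)
      exact mul_le_mul_of_nonneg_left hcd hγpos.le
    calc s - γ ≤ s - γ/2 - ((c:ℝ) * (eps γ / (γ/2))) * (B + s) := by linarith
    _ ≤ ∫ y, f y ∂Q x₀ := hmain
  -- choose n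
  obtain ⟨n, hn⟩ := exists_nat_gt (2*B/(s/2))
  have hn' : 2*B < n * (s/2) := by
    have hs2 : 0 < s/2 := by linarith
    calc 2*B = (2*B/(s/2)) * (s/2) := by field_simp
    _ < n * (s/2) := by
        apply mul_lt_mul_of_pos_right hn hs2
  -- choose x₀
  have hlt : s - η n < s := by have := hηpos n; linarith
  obtain ⟨r, hrmem, hr⟩ := exists_lt_of_lt_csSup ⟨u x₁, Set.mem_range_self x₁⟩ hlt
  obtain ⟨x₀, rfl⟩ := hrmem
  -- downward induction
  have hiterval : ∀ k, k ≤ n → s - η (n - k) ≤ T^[k] u x₀ := by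
    intro k
    induction k with
    | zero => intro _; simpa using hr.le
    | succ k ih =>
        intro hk
        have hk' : k ≤ n := Nat.le_of_succ_le hk
        have hkn : k < n := hk
        have hsub : n - k = (n - (k+1)) + 1 := by omega
        obtain ⟨km, kb, kharm, ks, _, _, _⟩ := hiter k
        have hprev : s - η ((n - (k+1)) + 1) ≤ T^[k] u x₀ := by
          rw [← hsub]; exact ih hk'
        have := hstep (T^[k] u) km kb kharm ks (n - (k+1)) x₀ hprev
        rw [Function.iterate_succ_apply' T k u]
        exact this
  -- sum up
  have hsum : ∀ k, k < n → s/2 ≤ T^[k] u x₀ := by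
    intro k hk
    have h1 := hiterval k hk.le
    have h2 := hηle (n - k)
    linarith
  have htelsum : ∑ k ∈ Finset.range n, T^[k] u x₀ = h x₀ - T^[n] h x₀ := by
    have : ∀ k ∈ Finset.range n, T^[k] u x₀ = T^[k] h x₀ - T^[k+1] h x₀ := by
      intro k _
      exact (hiter k).2.2.2.2.1 x₀
    rw [Finset.sum_congr rfl this]
    exact Finset.sum_range_sub' (fun k => T^[k] h x₀) n
  have hlower : (n : ℝ) * (s/2) ≤ ∑ k ∈ Finset.range n, T^[k] u x₀ := by
    calc (n : ℝ) * (s/2) = ∑ _k ∈ Finset.range n, (s/2) := by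
          rw [Finset.sum_const, Finset.card_range, nsmul_eq_mul]
    _ ≤ ∑ k ∈ Finset.range n, T^[k] u x₀ :=
          Finset.sum_le_sum (fun k hk => hsum k (Finset.mem_range.1 hk))
  have hupper : h x₀ - T^[n] h x₀ ≤ B := by
    obtain ⟨_, _, _, _, _, _, hHb⟩ := hiter n
    have := hC x₀
    have := (abs_le.1 (hHb x₀)).1
    rw [hBdef]
    linarith [(abs_le.1 (hC x₀)).2]
  rw [htelsum] at hlower
  linarith

end StmtAux

/-- asymptotic commutativity of Markov kernels implies that bounded
`P`-harmonic functions are `Q`-harmonic. -/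
theorem stmt2 {M : Type*} [MeasurableSpace M] (P Q : Kernel M M)
    [IsMarkovKernel P] [IsMarkovKernel Q]
    (htv : ∀ x : M, Tendsto
      (fun t => tvDist (((kpow P t) x).bind (⇑Q)) ((Q x).bind (⇑(kpow P t)))) atTop (nhds 0))
    (c : ℝ≥0) (hc : 0 < c)
    (hdom : ∀ (x : M) (A : Set M), Q x A ≤ (c : ℝ≥0∞) * ktilde P x A)
    (h : M → ℝ) (hmeas : Measurable h) (hbdd : ∃ C, ∀ x, |h x| ≤ C)
    (hharm : ∀ x, h x = ∫ y, h y ∂(P x)) :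
    ∀ x, h x = ∫ y, h y ∂(Q x) := by
  obtain ⟨C, hC⟩ := hbdd
  intro x
  have h1 := stmt2_one_sided htv hdom hmeas hC hharm x
  have hneg : ∀ z, (fun y => -h y) z = ∫ y, (fun y => -h y) y ∂P z := by
    intro z
    simp only
    rw [integral_neg, ← hharm z]
  have h2 := stmt2_one_sided htv hdom hmeas.neg
    (fun z => by simpa using hC z) hneg x
  simp only [Pi.neg_apply, integral_neg] at h2
  have h2' : ∫ y, h y ∂Q x ≤ h x := by linarith
  linarith
end

section
/- Let B be a Banach space, B* its dual, S* the closed unit ball of B*, and T : B → B a linear contraction with adjoint T*. Then for every x ∈ B, lim_{n→∞} ‖T^n x‖ = sup { |⟨x, x*⟩| : x* ∈ ⋂_{n≥1} T*^n S* }. -/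
open Filter

/-- Derriennic: for a linear contraction `T` on a Banach space `B`,
`‖T^n x‖` converges to the supremum of `|⟨x, x*⟩|` over all functionals `x*` lying in
`⋂_{n ≥ 1} T*ⁿ S*`, where `S*` is the closed unit ball of the dual. -/
theorem stmt4 {B : Type*} [NormedAddCommGroup B] [NormedSpace ℝ B] [CompleteSpace B]
    (T : B →L[ℝ] B) (hT : ‖T‖ ≤ 1) (x : B) :
    Tendsto (fun n => ‖(T ^ n) x‖) atTop
      (nhds (⨆ φ : {φ : B →L[ℝ] ℝ //
        ∀ n : ℕ, 1 ≤ n → ∃ ψ : B →L[ℝ] ℝ, ‖ψ‖ ≤ 1 ∧ φ = ψ.comp (T ^ n)}, |φ.1 x|)) := by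
  -- powers of `T` are contractions
  have hcontr : ∀ (n : ℕ) (y : B), ‖(T ^ n) y‖ ≤ ‖y‖ := by
    intro n
    induction n with
    | zero => intro y; simp
    | succ n ih =>
      intro y
      have h1 : (T ^ (n + 1)) y = T ((T ^ n) y) := by
        rw [pow_succ']; rfl
      rw [h1]
      calc ‖T ((T ^ n) y)‖ ≤ ‖T‖ * ‖(T ^ n) y‖ := T.le_opNorm _
        _ ≤ 1 * ‖y‖ := by
            apply mul_le_mul hT (ih y) (norm_nonneg _) zero_le_one
        _ = ‖y‖ := one_mul _
  -- the sequence is antitone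
  have hmono : Antitone (fun n => ‖(T ^ n) x‖) := by
    apply antitone_nat_of_succ_le
    intro n
    have h1 : (T ^ (n + 1)) x = T ((T ^ n) x) := by rw [pow_succ']; rfl
    simp only [h1]
    calc ‖T ((T ^ n) x)‖ ≤ ‖T‖ * ‖(T ^ n) x‖ := T.le_opNorm _
      _ ≤ 1 * ‖(T ^ n) x‖ := by
          exact mul_le_mul_of_nonneg_right hT (norm_nonneg _)
      _ = ‖(T ^ n) x‖ := one_mul _
  have hbdd : BddBelow (Set.range fun n => ‖(T ^ n) x‖) := by
    refine ⟨0, ?_⟩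
    rintro _ ⟨n, rfl⟩
    exact norm_nonneg _
  set L := ⨅ n, ‖(T ^ n) x‖ with hLdef
  have hTend : Tendsto (fun n => ‖(T ^ n) x‖) atTop (nhds L) :=
    tendsto_atTop_ciInf hmono hbdd
  have hL0 : 0 ≤ L := le_ciInf fun n => norm_nonneg _
  -- dual functionals attaining the norms
  choose ψ hψ1 hψ2 using fun n => exists_dual_vector'' ℝ ((T ^ n) x)
  set u : ℕ → WeakDual ℝ B := fun n => ((ψ n).comp (T ^ n) : B →L[ℝ] ℝ) with hu
  have hunorm : ∀ m n : ℕ, ‖(ψ n).comp (T ^ m)‖ ≤ 1 := by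
    intro m n
    apply ContinuousLinearMap.opNorm_le_bound _ zero_le_one
    intro y
    calc ‖(ψ n) ((T ^ m) y)‖ ≤ ‖ψ n‖ * ‖(T ^ m) y‖ := (ψ n).le_opNorm _
      _ ≤ 1 * ‖y‖ := mul_le_mul (hψ1 n) (hcontr m y) (norm_nonneg _) zero_le_one
      _ = 1 * ‖y‖ := rfl
  -- the closed unit ball in the weak-* topology
  set K : Set (WeakDual ℝ B) :=
    WeakDual.toStrongDual ⁻¹' Metric.closedBall 0 1 with hK
  have hKc : IsCompact K := WeakDual.isCompact_closedBall (𝕜 := ℝ) 0 1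
  have huK : ∀ n, u n ∈ K := by
    intro n
    simp only [hK, Set.mem_preimage, mem_closedBall_zero_iff]
    exact hunorm n n
  have hle : Filter.map u atTop ≤ Filter.principal K := by
    rw [Filter.le_principal_iff]
    exact Filter.mem_map.mpr (Filter.Eventually.of_forall huK)
  obtain ⟨φ, hφK, hφcl⟩ := hKc.exists_mapClusterPt hle
  -- the cluster point belongs to each `T*ⁿ S*`
  have hmem : ∀ m : ℕ, 1 ≤ m → ∃ ψ' : B →L[ℝ] ℝ, ‖ψ'‖ ≤ 1 ∧
      (WeakDual.toStrongDual φ : B →L[ℝ] ℝ) = ψ'.comp (T ^ m) := by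
    intro m hm
    -- the image of the ball under composition with `T ^ m`
    set cmap : WeakDual ℝ B → WeakDual ℝ B :=
      fun χ => (((χ : B →L[ℝ] ℝ).comp (T ^ m) : B →L[ℝ] ℝ) : WeakDual ℝ B) with hcmap
    have hcont : Continuous cmap := by
      apply WeakDual.continuous_of_continuous_eval
      intro y
      exact WeakDual.eval_continuous ((T ^ m) y)
    have hKm : IsCompact (cmap '' K) := hKc.image hcont
    have hKmclosed : IsClosed (cmap '' K) := hKm.isClosed
    have hev : ∀ n, m ≤ n → u n ∈ cmap '' K := by
      intro n hn
      refine ⟨((ψ n).comp (T ^ (n - m)) : B →L[ℝ] ℝ), ?_, ?_⟩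
      · simp only [hK, Set.mem_preimage, mem_closedBall_zero_iff]
        exact mem_closedBall_zero_iff.mpr (hunorm (n - m) n)
      · show (((ψ n).comp (T ^ (n - m))).comp (T ^ m) : B →L[ℝ] ℝ) = (ψ n).comp (T ^ n)
        rw [ContinuousLinearMap.comp_assoc]
        congr 1
        ext y
        have : (T ^ (n - m)) ((T ^ m) y) = (T ^ (n - m) * T ^ m) y := rfl
        rw [ContinuousLinearMap.comp_apply, this, ← pow_add, Nat.sub_add_cancel hn]
    -- cluster point of a filter containing a closed set
    have hKm_mem : cmap '' K ∈ Filter.map u atTop := by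
      rw [Filter.mem_map]
      filter_upwards [Filter.eventually_ge_atTop m] with n hn using hev n hn
    have hcl2 : ClusterPt φ (Filter.principal (cmap '' K)) :=
      hφcl.clusterPt.mono (Filter.le_principal_iff.mpr hKm_mem)
    have hφin : φ ∈ cmap '' K := hKmclosed.closure_eq ▸ mem_closure_iff_clusterPt.mpr hcl2
    obtain ⟨χ, hχK, hχeq⟩ := hφin
    refine ⟨(χ : B →L[ℝ] ℝ), ?_, ?_⟩
    · exact mem_closedBall_zero_iff.mp hχK
    · exact hχeq.symm
  -- the value of the cluster point at `x` equals `L`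
  have hφx : φ x = L := by
    have hcont : ContinuousAt (fun χ : WeakDual ℝ B => χ x) φ :=
      (WeakDual.eval_continuous x).continuousAt
    have h1 : MapClusterPt (φ x) atTop (fun n => (u n) x) := by
      have := hφcl.map hcont (Filter.tendsto_map)
      exact this
    have h2 : (fun n => (u n) x) = fun n => ‖(T ^ n) x‖ := by
      funext n
      show ((ψ n).comp (T ^ n)) x = ‖(T ^ n) x‖
      rw [ContinuousLinearMap.comp_apply]
      exact hψ2 n
    rw [h2] at h1
    have hne : (nhds (φ x) ⊓ nhds L).NeBot := by
      refine h1.clusterPt.neBot.mono (inf_le_inf_left _ ?_)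
      exact hTend
    exact eq_of_nhds_neBot hne
  -- conclude
  set S := {φ : B →L[ℝ] ℝ //
    ∀ n : ℕ, 1 ≤ n → ∃ ψ : B →L[ℝ] ℝ, ‖ψ‖ ≤ 1 ∧ φ = ψ.comp (T ^ n)} with hS
  have hφS : (WeakDual.toStrongDual φ : B →L[ℝ] ℝ) ∈
      {φ : B →L[ℝ] ℝ | ∀ n : ℕ, 1 ≤ n → ∃ ψ : B →L[ℝ] ℝ, ‖ψ‖ ≤ 1 ∧ φ = ψ.comp (T ^ n)} :=
    hmem
  have hne : Nonempty S := ⟨⟨_, hφS⟩⟩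
  have hub : ∀ φ' : S, |φ'.1 x| ≤ L := by
    intro φ'
    apply le_ciInf
    intro n
    rcases Nat.eq_zero_or_pos n with hn | hn
    · subst hn
      obtain ⟨ψ', hψ'1, hψ'2⟩ := φ'.2 1 le_rfl
      rw [hψ'2]
      calc |(ψ'.comp (T ^ 1)) x| = ‖ψ' ((T ^ 1) x)‖ := by
            rw [ContinuousLinearMap.comp_apply, Real.norm_eq_abs]
        _ ≤ ‖ψ'‖ * ‖(T ^ 1) x‖ := ψ'.le_opNorm _
        _ ≤ 1 * ‖x‖ := mul_le_mul hψ'1 (hcontr 1 x) (norm_nonneg _) zero_le_one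
        _ = ‖(T ^ 0) x‖ := by simp
    · obtain ⟨ψ', hψ'1, hψ'2⟩ := φ'.2 n hn
      rw [hψ'2]
      calc |(ψ'.comp (T ^ n)) x| = ‖ψ' ((T ^ n) x)‖ := by
            rw [ContinuousLinearMap.comp_apply, Real.norm_eq_abs]
        _ ≤ ‖ψ'‖ * ‖(T ^ n) x‖ := ψ'.le_opNorm _
        _ ≤ 1 * ‖(T ^ n) x‖ := mul_le_mul_of_nonneg_right hψ'1 (norm_nonneg _)
        _ = ‖(T ^ n) x‖ := one_mul _
  have hbddS : BddAbove (Set.range fun φ' : S => |φ'.1 x|) := by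
    refine ⟨L, ?_⟩
    rintro _ ⟨φ', rfl⟩
    exact hub φ'
  have hsup : (⨆ φ' : S, |φ'.1 x|) = L := by
    apply le_antisymm
    · exact ciSup_le hub
    · refine le_ciSup_of_le hbddS ⟨_, hφS⟩ ?_
      show L ≤ |(WeakDual.toStrongDual φ) x|
      have : (WeakDual.toStrongDual φ) x = L := hφx
      rw [this, abs_of_nonneg hL0]
  rw [hsup]
  exact hTend
end

section
/- Let B be a Banach space, S* the closed unit ball of its dual, and T : B → B a linear contraction. Then for every x ∈ B, lim_{n→∞} (1/n)‖Σ_{i=1}^n T^i x‖ = sup { |⟨x, x*⟩| : x* ∈ S*, T* x* = x* }, where T* is the adjoint of T. -/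
open Filter

/-- Derriennic: for a linear contraction `T` on a Banach space `B`,
`(1/n)‖Σ_{i=1}^n T^i x‖` converges to the supremum of `|⟨x, x*⟩|` over the fixed points of
the adjoint `T*` (i.e. `x* ∘ T = x*`) in the closed unit ball of the dual. -/
theorem stmt5 {B : Type*} [NormedAddCommGroup B] [NormedSpace ℝ B] [CompleteSpace B]
    (T : B →L[ℝ] B) (hT : ‖T‖ ≤ 1) (x : B) :
    Tendsto (fun n : ℕ => (1 / (n : ℝ)) * ‖∑ i ∈ Finset.Icc 1 n, (T ^ i) x‖) atTop
      (nhds (⨆ φ : {φ : B →L[ℝ] ℝ // ‖φ‖ ≤ 1 ∧ φ.comp T = φ}, |φ.1 x|)) := by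
  haveI : Nonempty {φ : B →L[ℝ] ℝ // ‖φ‖ ≤ 1 ∧ φ.comp T = φ} :=
    ⟨⟨0, by simp, by ext y; simp⟩⟩
  -- norms of powers
  have hTn : ∀ n : ℕ, ‖T ^ n‖ ≤ 1 := by
    intro n
    rcases Nat.eq_zero_or_pos n with rfl | hn
    · rw [pow_zero]
      exact ContinuousLinearMap.norm_id_le
    · exact (norm_pow_le' T hn).trans (pow_le_one₀ (norm_nonneg T) hT)
  have hTny : ∀ (n : ℕ) (y : B), ‖(T ^ n) y‖ ≤ ‖y‖ := by
    intro n y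
    refine ((T ^ n).le_opNorm y).trans ?_
    nlinarith [hTn n, norm_nonneg y]
  set S : ℕ → B := fun n => ∑ i ∈ Finset.Icc 1 n, (T ^ i) x with hS
  set a : ℕ → ℝ := fun n => ‖S n‖ with ha
  have hIcc : ∀ k : ℕ, Finset.Icc 1 k = Finset.Ioc 0 k := fun k => by rw [← Finset.Icc_add_one_left_eq_Ioc, zero_add]
  -- key decomposition
  have key : ∀ m n : ℕ, S (m + n) = S m + (T ^ m) (S n) := by
    intro m n
    have h2 : Finset.Ioc m (m + n) = (Finset.Ioc 0 n).map (addLeftEmbedding m) := by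
      rw [Finset.map_add_left_Ioc, add_zero]
    simp only [hS, hIcc]
    rw [← Finset.sum_Ioc_consecutive _ (Nat.zero_le m) (Nat.le_add_right m n), map_sum, h2,
      Finset.sum_map]
    congr 1
    refine Finset.sum_congr rfl fun j _ => ?_
    simp only [addLeftEmbedding_apply, pow_add, ContinuousLinearMap.mul_apply]
  have hsub : Subadditive a := by
    intro m n
    rw [ha]
    simp only [key m n]
    exact (norm_add_le _ _).trans (add_le_add_right (hTny m (S n)) _)
  have hbdd : BddBelow (Set.range fun n => a n / n) := by
    refine ⟨0, fun r hr => ?_⟩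
    obtain ⟨n, rfl⟩ := hr
    positivity
  set L : ℝ := hsub.lim with hLdef
  have hL : Tendsto (fun n => a n / n) atTop (nhds L) := hsub.tendsto_lim hbdd
  -- fixed functionals are constant on the orbit
  have hfix_pow : ∀ (φ : B →L[ℝ] ℝ), φ.comp T = φ → ∀ (i : ℕ) (y : B), φ ((T ^ i) y) = φ y := by
    intro φ hφ i
    induction i with
    | zero => intro y; simp
    | succ i ih =>
      intro y
      rw [pow_succ, ContinuousLinearMap.mul_apply, ih (T y)]
      have := DFunLike.congr_fun hφ y
      simpa using this
  have hφS : ∀ (φ : B →L[ℝ] ℝ), φ.comp T = φ → ∀ n : ℕ, φ (S n) = n * φ x := by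
    intro φ hφ n
    rw [hS]
    simp only [map_sum]
    rw [Finset.sum_congr rfl fun i _ => hfix_pow φ hφ i x, Finset.sum_const, Nat.card_Icc]
    simp [nsmul_eq_mul]
  -- upper bound: sup ≤ L
  have hsup_le : (⨆ φ : {φ : B →L[ℝ] ℝ // ‖φ‖ ≤ 1 ∧ φ.comp T = φ}, |φ.1 x|) ≤ L := by
    refine ciSup_le fun φ => ?_
    refine ge_of_tendsto hL (eventually_atTop.2 ⟨1, fun n hn => ?_⟩)
    have hn0 : (0 : ℝ) < n := by exact_mod_cast hn
    rw [le_div_iff₀ hn0]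
    have h1 : |φ.1 x| * n = |φ.1 (S n)| := by
      rw [hφS φ.1 φ.2.2 n, abs_mul, abs_of_nonneg (by positivity : (0:ℝ) ≤ (n:ℝ)), mul_comm]
    rw [h1, ← Real.norm_eq_abs]
    refine (φ.1.le_opNorm (S n)).trans ?_
    nlinarith [φ.2.1, norm_nonneg (S n)]
  -- Hahn-Banach functionals
  have hg : ∀ n : ℕ, ∃ g : B →L[ℝ] ℝ, ‖g‖ ≤ 1 ∧ g (S n) = ‖S n‖ := fun n =>
    exists_dual_vector'' ℝ (S n)
  choose g hg1 hg2 using hg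
  -- Cesàro averages of the adjoint orbit
  set ψ : ℕ → (B →L[ℝ] ℝ) :=
    fun n => ((n : ℝ))⁻¹ • ∑ k ∈ Finset.Icc 1 n, (g n).comp (T ^ k) with hψ
  have hψapp : ∀ (n : ℕ) (w : B), ψ n w = (n : ℝ)⁻¹ * ∑ k ∈ Finset.Icc 1 n, g n ((T ^ k) w) := by
    intro n w
    simp [hψ, ContinuousLinearMap.sum_apply, smul_eq_mul]
  have hψx : ∀ n : ℕ, ψ n x = a n / n := by
    intro n
    rw [hψapp, ← map_sum]
    rw [show (∑ k ∈ Finset.Icc 1 n, (T ^ k) x) = S n from rfl, hg2 n, div_eq_inv_mul]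
  have hψnorm : ∀ n : ℕ, ‖ψ n‖ ≤ 1 := by
    intro n
    rcases Nat.eq_zero_or_pos n with rfl | hn
    · simp [hψ]
    · have hn0 : (0 : ℝ) < n := by exact_mod_cast hn
      show ‖(n : ℝ)⁻¹ • ∑ k ∈ Finset.Icc 1 n, (g n).comp (T ^ k)‖ ≤ 1
      refine (norm_smul_le ((n : ℝ)⁻¹) (∑ k ∈ Finset.Icc 1 n, (g n).comp (T ^ k))).trans ?_
      rw [Real.norm_eq_abs, abs_of_nonneg (by positivity : (0:ℝ) ≤ (n:ℝ)⁻¹)]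
      have h1 : ‖∑ k ∈ Finset.Icc 1 n, (g n).comp (T ^ k)‖ ≤ n := by
        refine (norm_sum_le _ _).trans ?_
        have h2 : ∀ k ∈ Finset.Icc 1 n, ‖(g n).comp (T ^ k)‖ ≤ 1 := fun k _ =>
          ((g n).opNorm_comp_le (T ^ k)).trans
            (by nlinarith [hg1 n, hTn k, norm_nonneg (g n)])
        calc ∑ k ∈ Finset.Icc 1 n, ‖(g n).comp (T ^ k)‖ ≤ ∑ _k ∈ Finset.Icc 1 n, (1 : ℝ) :=
              Finset.sum_le_sum h2
          _ = n := by simp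
      calc (n : ℝ)⁻¹ * ‖∑ k ∈ Finset.Icc 1 n, (g n).comp (T ^ k)‖ ≤ (n : ℝ)⁻¹ * n :=
            mul_le_mul_of_nonneg_left h1 (by positivity)
        _ = 1 := inv_mul_cancel₀ hn0.ne'
  -- almost invariance
  have hgz : ∀ (n : ℕ) (z : B), |g n z| ≤ ‖z‖ := by
    intro n z
    rw [← Real.norm_eq_abs]
    refine ((g n).le_opNorm z).trans ?_
    nlinarith [hg1 n, norm_nonneg z]
  have hψfix : ∀ y : B, Tendsto (fun n => ψ n (T y) - ψ n y) atTop (nhds 0) := by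
    intro y
    have key2 : ∀ n : ℕ,
        ψ n (T y) - ψ n y = (n : ℝ)⁻¹ * (g n ((T ^ (1 + n)) y) - g n ((T ^ (1 + 0)) y)) := by
      intro n
      rw [hψapp, hψapp, ← mul_sub, ← Finset.sum_sub_distrib]
      congr 1
      have hIco : Finset.Icc 1 n = Finset.Ico 1 (n + 1) := by
        rw [Finset.Ico_add_one_right_eq_Icc]
      calc ∑ k ∈ Finset.Icc 1 n, (g n ((T ^ k) (T y)) - g n ((T ^ k) y))
          = ∑ i ∈ Finset.range n,
              ((fun i => g n ((T ^ (1 + i)) y)) (i + 1) - (fun i => g n ((T ^ (1 + i)) y)) i) := by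
            rw [hIco, Finset.sum_Ico_eq_sum_range]
            simp only [Nat.add_sub_cancel]
            refine Finset.sum_congr rfl fun i _ => ?_
            have hpow : (T ^ (1 + (i + 1))) y = (T ^ (1 + i)) (T y) := by
              rw [show 1 + (i + 1) = (1 + i) + 1 by omega, pow_succ,
                ContinuousLinearMap.mul_apply]
            simp only [hpow]
        _ = g n ((T ^ (1 + n)) y) - g n ((T ^ (1 + 0)) y) :=
            Finset.sum_range_sub (fun i => g n ((T ^ (1 + i)) y)) n
    have bound : ∀ n : ℕ, ‖ψ n (T y) - ψ n y‖ ≤ 2 * ‖y‖ / n := by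
      intro n
      rw [key2 n, Real.norm_eq_abs, abs_mul, abs_of_nonneg (by positivity : (0:ℝ) ≤ (n:ℝ)⁻¹),
        div_eq_inv_mul]
      refine mul_le_mul_of_nonneg_left ?_ (by positivity)
      refine (abs_sub _ _).trans ?_
      have b1 := (hgz n ((T ^ (1 + n)) y)).trans (hTny (1 + n) y)
      have b2 := (hgz n ((T ^ (1 + 0)) y)).trans (hTny (1 + 0) y)
      linarith
    exact squeeze_zero_norm bound (tendsto_const_div_atTop_nhds_zero_nat (2 * ‖y‖))
  -- Banach-Alaoglu + cluster point
  set K : Set (WeakDual ℝ B) :=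
    WeakDual.toStrongDual ⁻¹' Metric.closedBall (0 : StrongDual ℝ B) 1 with hK
  have hKcomp : IsCompact K := WeakDual.isCompact_closedBall (0 : StrongDual ℝ B) 1
  set Ψ : ℕ → WeakDual ℝ B := fun n => StrongDual.toWeakDual (ψ n) with hΨ
  have hmem : ∀ n, Ψ n ∈ K := by
    intro n
    simp only [hK, Set.mem_preimage, mem_closedBall_zero_iff]
    exact hψnorm n
  have hle : map Ψ atTop ≤ Filter.principal K :=
    le_principal_iff.2 (mem_map.2 (Eventually.of_forall hmem))
  obtain ⟨psiL, hpsiLK, hcl⟩ := hKcomp.exists_clusterPt hle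
  -- transfer cluster points through continuous evaluations
  have transfer : ∀ (f : WeakDual ℝ B → ℝ) (c : ℝ), Continuous f →
      Tendsto (fun n => f (Ψ n)) atTop (nhds c) → f psiL = c := by
    intro f c hf hconv
    have h1 : ClusterPt (f psiL) (nhds c) :=
      hcl.map hf.continuousAt (by rwa [Filter.Tendsto, Filter.map_map])
    exact eq_of_nhds_neBot h1
  have hxL : psiL x = L :=
    transfer (fun w => w x) L (WeakDual.eval_continuous x)
      (by exact (hL.congr fun n => (hψx n).symm))
  have hfixL : ∀ y : B, psiL (T y) = psiL y := by
    intro y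
    have h0 : (fun w : WeakDual ℝ B => w (T y) - w y) psiL = 0 :=
      transfer (fun w => w (T y) - w y) 0
        ((WeakDual.eval_continuous (T y)).sub (WeakDual.eval_continuous y))
        (hψfix y)
    exact sub_eq_zero.1 h0
  set Φ : B →L[ℝ] ℝ := WeakDual.toStrongDual psiL with hΦ
  have hΦ1 : ‖Φ‖ ≤ 1 := by
    have := hpsiLK
    simpa only [hK, Set.mem_preimage, mem_closedBall_zero_iff] using this
  have hΦ2 : Φ.comp T = Φ := ContinuousLinearMap.ext fun y => hfixL y
  have hΦx : Φ x = L := hxL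
  -- lower bound: L ≤ sup
  have hbddAbove : BddAbove (Set.range
      fun φ : {φ : B →L[ℝ] ℝ // ‖φ‖ ≤ 1 ∧ φ.comp T = φ} => |φ.1 x|) := by
    refine ⟨‖x‖, fun r hr => ?_⟩
    obtain ⟨φ, rfl⟩ := hr
    show |φ.1 x| ≤ ‖x‖
    calc |φ.1 x| = ‖φ.1 x‖ := (Real.norm_eq_abs _).symm
      _ ≤ 1 * ‖x‖ := φ.1.le_of_opNorm_le φ.2.1 x
      _ = ‖x‖ := one_mul _
  have hle_sup : L ≤ ⨆ φ : {φ : B →L[ℝ] ℝ // ‖φ‖ ≤ 1 ∧ φ.comp T = φ}, |φ.1 x| := by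
    calc L = Φ x := hΦx.symm
      _ ≤ |Φ x| := le_abs_self _
      _ ≤ _ := le_ciSup hbddAbove (⟨Φ, hΦ1, hΦ2⟩ :
          {φ : B →L[ℝ] ℝ // ‖φ‖ ≤ 1 ∧ φ.comp T = φ})
  have hsup : (⨆ φ : {φ : B →L[ℝ] ℝ // ‖φ‖ ≤ 1 ∧ φ.comp T = φ}, |φ.1 x|) = L :=
    le_antisymm hsup_le hle_sup
  rw [hsup]
  refine hL.congr fun n => ?_
  rw [div_eq_inv_mul, one_div]
end

section
/- Let G be a group with a G-invariant σ-algebra, μ a probability measure on G, and t ∈ (0,1). Define θ = t·μ + (1−t)·δ_e. Then H^∞(G,μ) = H^∞(G,θ): a bounded measurable function on G is μ-harmonic if and only if it is θ-harmonic. -/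
open MeasureTheory Filter ProbabilityTheory
open scoped ENNReal NNReal

noncomputable def mconv {G : Type*} [Mul G] [MeasurableSpace G] (μ ν : Measure G) : Measure G :=
  (μ.prod ν).map (fun p => p.1 * p.2)

noncomputable def mconvPow {G : Type*} [Monoid G] [MeasurableSpace G] (μ : Measure G) : ℕ → Measure G
  | 0 => Measure.dirac 1
  | n+1 => mconv (mconvPow μ n) μ

noncomputable def tildeMeasure {G : Type*} [Monoid G] [MeasurableSpace G] (μ : Measure G) : Measure G :=
  Measure.sum (fun n => ((2:ℝ≥0∞)^(n+1))⁻¹ • mconvPow μ n)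


/-- the lazy version `θ = t·μ + (1−t)·δ_e` of `μ` has the same bounded
harmonic functions as `μ`. -/
theorem stmt8 {G : Type*} [Group G] [MeasurableSpace G] [MeasurableMul₂ G]
    (μ : Measure G) [IsProbabilityMeasure μ]
    (t : ℝ) (ht : t ∈ Set.Ioo (0:ℝ) 1)
    (θ : Measure G)
    (hθ : θ = ENNReal.ofReal t • μ + ENNReal.ofReal (1 - t) • Measure.dirac (1 : G))
    (h : G → ℂ) (hmeas : Measurable h) (hbdd : ∃ C, ∀ g, ‖h g‖ ≤ C) :
    (∀ g, h g = ∫ γ, h (g * γ) ∂μ) ↔ (∀ g, h g = ∫ γ, h (g * γ) ∂θ) := by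
  obtain ⟨C, hC⟩ := hbdd
  obtain ⟨ht0, ht1⟩ := ht
  have key : ∀ g : G, ∫ γ, h (g * γ) ∂θ = t • (∫ γ, h (g * γ) ∂μ) + (1 - t) • h g := by
    intro g
    set f : G → ℂ := fun γ => h (g * γ) with hf
    have hfm : Measurable f := hmeas.comp (measurable_const_mul g)
    have hintμ : Integrable f μ :=
      (integrable_const C).mono' hfm.aestronglyMeasurable (ae_of_all _ fun x => hC _)
    have hintδ : Integrable f (Measure.dirac (1 : G)) :=
      (integrable_const C).mono' hfm.aestronglyMeasurable (ae_of_all _ fun x => hC _)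
    rw [hθ, integral_add_measure
        (hintμ.smul_measure ENNReal.ofReal_ne_top)
        (hintδ.smul_measure ENNReal.ofReal_ne_top),
      integral_smul_measure, integral_smul_measure, integral_dirac' f 1 hfm.stronglyMeasurable,
      ENNReal.toReal_ofReal ht0.le, ENNReal.toReal_ofReal (by linarith)]
    simp [hf]
  constructor
  · intro hh g
    rw [key g, ← hh g]
    rw [Complex.real_smul, Complex.real_smul]
    push_cast
    ring
  · intro hh g
    have := hh g
    rw [key g] at this
    have ht' : (t : ℂ) ≠ 0 := by
      exact_mod_cast ne_of_gt ht0
    rw [Complex.real_smul, Complex.real_smul] at this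
    push_cast at this
    have : (t : ℂ) * h g = (t : ℂ) * ∫ γ, h (g * γ) ∂μ := by ring_nf; ring_nf at this; linear_combination this
    exact mul_left_cancel₀ ht' this
end

section
/- Let G₁, G₂ be groups each equipped with an invariant σ-algebra, and μ₁, μ₂ probability measures on them with μ₁({e_{G₁}}) > 0. If h is a bounded (μ₁ × μ₂)-harmonic function on G₁ × G₂, then for every g₁ ∈ G₁ the function γ ↦ h(g₁, γ) on G₂ is μ₂-harmonic. -/
open MeasureTheory Filter ProbabilityTheory
open scoped ENNReal NNReal

lemma aux_integrable {α : Type*} [MeasurableSpace α] (μ : Measure α) [IsFiniteMeasure μ]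
    {f : α → ℝ} (hf : Measurable f) {C : ℝ} (hC : ∀ x, |f x| ≤ C) : Integrable f μ :=
  (integrable_const C).mono' hf.aestronglyMeasurable
    (Eventually.of_forall fun x => by simpa [Real.norm_eq_abs] using hC x)

lemma abs_integral_le' {α : Type*} [MeasurableSpace α] (μ : Measure α) [IsProbabilityMeasure μ]
    {f : α → ℝ} {C : ℝ} (h : ∀ x, |f x| ≤ C) : |∫ x, f x ∂μ| ≤ C := by
  have := norm_integral_le_of_norm_le_const (μ := μ) (f := f) (C := C)
    (Eventually.of_forall (by simpa [Real.norm_eq_abs] using h))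
  simpa [Real.norm_eq_abs] using this

lemma integral_le_const' {α : Type*} [MeasurableSpace α] (μ : Measure α) [IsProbabilityMeasure μ]
    {f : α → ℝ} {M : ℝ} (hf : Integrable f μ) (h : ∀ x, f x ≤ M) : ∫ x, f x ∂μ ≤ M := by
  have := integral_mono hf (integrable_const M) h
  simpa using this

/-- On a measurable hull of a point, every measurable function is a.e. equal to its value there. -/
lemma aux_hull {α : Type*} [MeasurableSpace α] (μ : Measure α) [IsFiniteMeasure μ]
    {x : α} {f : α → ℝ} (hf : Measurable f) :
    ∫ a in (MeasureTheory.toMeasurable μ {x}), f a ∂μ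
      = (μ (MeasureTheory.toMeasurable μ {x})).toReal * f x := by
  set A := MeasureTheory.toMeasurable μ {x} with hA
  have hAm : MeasurableSet A := measurableSet_toMeasurable μ {x}
  have hxA : x ∈ A := subset_toMeasurable μ {x} rfl
  have hmuA : μ A = μ {x} := measure_toMeasurable {x}
  set S := {a | f a ≠ f x} with hS
  have hSm : MeasurableSet S := (hf (measurableSet_singleton (f x))).compl
  have hsub : {x} ⊆ A \ S := by
    intro a ha
    rcases ha with rfl
    exact ⟨hxA, fun hb => hb rfl⟩
  have h1 : μ (A ∩ S) + μ (A \ S) = μ A := measure_inter_add_diff (μ := μ) A hSm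
  have h2 : μ A ≤ μ (A \ S) := hmuA ▸ (measure_mono hsub)
  have hBz : μ (A ∩ S) = 0 := by
    have h3 : μ (A \ S) ≤ μ A := measure_mono Set.diff_subset
    have h4 : μ (A \ S) = μ A := le_antisymm h3 h2
    rw [h4] at h1
    have h5 : μ (A ∩ S) + μ A = 0 + μ A := by simpa using h1
    exact WithTop.add_right_cancel (measure_ne_top μ _) h5
  have hae : ∀ᵐ a ∂μ, a ∈ A → f a = f x := by
    have : ∀ᵐ a ∂μ, a ∉ A ∩ S := by
      rw [ae_iff]
      simpa only [not_not, Set.setOf_mem_eq] using hBz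
    filter_upwards [this] with a ha haA
    by_contra hne
    exact ha ⟨haA, hne⟩
  rw [setIntegral_congr_ae hAm (by filter_upwards [hae] with a ha haA using ha haA)]
  simp [smul_eq_mul, mul_comm, Measure.real]


noncomputable def Sm {G₁ G₂ : Type*} [MeasurableSpace G₂] [Mul G₂] (μ₂ : Measure G₂)
    (f : G₁ × G₂ → ℝ) : G₁ × G₂ → ℝ :=
  fun g => ∫ b, f (g.1, g.2 * b) ∂μ₂

section SmLemmas
variable {G₁ G₂ : Type*} [Group G₁] [Group G₂]
    [MeasurableSpace G₁] [MeasurableSpace G₂]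
    [MeasurableMul₂ G₁] [MeasurableMul₂ G₂]
    (μ₁ : Measure G₁) (μ₂ : Measure G₂)
    [IsProbabilityMeasure μ₁] [IsProbabilityMeasure μ₂]

instance Prod.instMeasurableMul₂' : MeasurableMul₂ (G₁ × G₂) where
  measurable_mul := by
    have : (fun p : (G₁ × G₂) × (G₁ × G₂) => p.1 * p.2)
        = fun p => (p.1.1 * p.2.1, p.1.2 * p.2.2) := rfl
    rw [this]; fun_prop

lemma Sm_meas {f : G₁ × G₂ → ℝ} (hf : Measurable f) : Measurable (Sm μ₂ f) := by
  have h1 : Measurable (fun p : (G₁ × G₂) × G₂ => f (p.1.1, p.1.2 * p.2)) := by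
    apply hf.comp
    fun_prop
  exact h1.stronglyMeasurable.integral_prod_right'.measurable

lemma Sm_bdd {f : G₁ × G₂ → ℝ} {C : ℝ} (hC : ∀ g, |f g| ≤ C) :
    ∀ g, |Sm μ₂ f g| ≤ C := fun g => abs_integral_le' μ₂ (fun b => hC _)

lemma Sm_le {f : G₁ × G₂ → ℝ} {C M : ℝ} (hf : Measurable f) (hC : ∀ g, |f g| ≤ C)
    (hM : ∀ g, f g ≤ M) : ∀ g, Sm μ₂ f g ≤ M := by
  intro g
  exact integral_le_const' μ₂
    (aux_integrable μ₂ (hf.comp (by fun_prop : Measurable fun b : G₂ => (g.1, g.2 * b)))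
      (fun b => hC _)) (fun b => hM _)

lemma Sm_sub {f f' : G₁ × G₂ → ℝ} {C C' : ℝ} (hf : Measurable f) (hf' : Measurable f')
    (hC : ∀ g, |f g| ≤ C) (hC' : ∀ g, |f' g| ≤ C') :
    ∀ g, Sm μ₂ (fun x => f x - f' x) g = Sm μ₂ f g - Sm μ₂ f' g := by
  intro g
  unfold Sm
  exact integral_sub
    (aux_integrable μ₂ (hf.comp (by fun_prop : Measurable fun b : G₂ => (g.1, g.2 * b))) (fun b => hC _))
    (aux_integrable μ₂ (hf'.comp (by fun_prop : Measurable fun b : G₂ => (g.1, g.2 * b))) (fun b => hC' _))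

lemma Sm_harm {f : G₁ × G₂ → ℝ} {C : ℝ} (hf : Measurable f) (hC : ∀ g, |f g| ≤ C)
    (hharm : ∀ g : G₁ × G₂, f g = ∫ γ, f (g * γ) ∂(μ₁.prod μ₂)) :
    ∀ g : G₁ × G₂, Sm μ₂ f g = ∫ γ, Sm μ₂ f (g * γ) ∂(μ₁.prod μ₂) := by
  intro g
  -- RHS computation
  have hΦmeas : Measurable (fun γ : G₁ × G₂ => Sm μ₂ f (g * γ)) :=
    (Sm_meas μ₂ hf).comp (measurable_const.mul measurable_id)
  have hRHS : ∫ γ, Sm μ₂ f (g * γ) ∂(μ₁.prod μ₂)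
      = ∫ a, ∫ b, ∫ c, f (g.1 * a, g.2 * b * c) ∂μ₂ ∂μ₂ ∂μ₁ := by
    rw [integral_prod _ (aux_integrable _ hΦmeas (fun γ => Sm_bdd μ₂ hC _))]
    rfl
  -- LHS computation
  have hLHS : Sm μ₂ f g = ∫ b, ∫ a, ∫ c, f (g.1 * a, g.2 * b * c) ∂μ₂ ∂μ₁ ∂μ₂ := by
    unfold Sm
    congr 1
    funext b
    rw [hharm (g.1, g.2 * b)]
    rw [integral_prod (fun γ : G₁ × G₂ => f ((g.1, g.2 * b) * γ))
      (aux_integrable _ (hf.comp (measurable_const.mul measurable_id)) (fun γ => hC _))]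
    rfl
  rw [hLHS, hRHS]
  -- swap the two outer integrals
  have hum : Measurable (Function.uncurry fun (b : G₂) (a : G₁) =>
      ∫ c, f (g.1 * a, g.2 * b * c) ∂μ₂) := by
    have h1 : Measurable (fun p : (G₂ × G₁) × G₂ => f (g.1 * p.1.2, g.2 * p.1.1 * p.2)) := by
      apply hf.comp
      fun_prop
    exact h1.stronglyMeasurable.integral_prod_right'.measurable
  exact integral_integral_swap (aux_integrable _ hum
    (fun p => abs_integral_le' μ₂ (fun c => hC _)))

end SmLemmas
section StepLemma
variable {G₁ G₂ : Type*} [Group G₁] [Group G₂]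
    [MeasurableSpace G₁] [MeasurableSpace G₂]
    [MeasurableMul₂ G₁] [MeasurableMul₂ G₂]
    (μ₁ : Measure G₁) (μ₂ : Measure G₂)
    [IsProbabilityMeasure μ₁] [IsProbabilityMeasure μ₂]

lemma step_ineq {f : G₁ × G₂ → ℝ} {C M : ℝ} (hf : Measurable f) (hC : ∀ g, |f g| ≤ C)
    (hM : ∀ g, f g ≤ M)
    (hharm : ∀ g : G₁ × G₂, f g = ∫ γ, f (g * γ) ∂(μ₁.prod μ₂)) (g : G₁ × G₂) :
    f g ≤ (μ₁ (MeasureTheory.toMeasurable μ₁ {(1 : G₁)})).toReal * Sm μ₂ f g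
      + (1 - (μ₁ (MeasureTheory.toMeasurable μ₁ {(1 : G₁)})).toReal) * M := by
  set A := MeasureTheory.toMeasurable μ₁ {(1 : G₁)} with hA
  have hAm : MeasurableSet A := measurableSet_toMeasurable μ₁ {(1 : G₁)}
  set ε := (μ₁ A).toReal with hε
  -- F a = ∫ b, f (g.1 * a, g.2 * b)
  set F : G₁ → ℝ := fun a => ∫ b, f (g.1 * a, g.2 * b) ∂μ₂ with hF
  have hFmeas : Measurable F := by
    have h1 : Measurable (fun p : G₁ × G₂ => f (g.1 * p.1, g.2 * p.2)) := by
      apply hf.comp; fun_prop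
    exact h1.stronglyMeasurable.integral_prod_right'.measurable
  have hFbdd : ∀ a, |F a| ≤ C := fun a => abs_integral_le' μ₂ (fun b => hC _)
  have hFle : ∀ a, F a ≤ M := fun a => integral_le_const' μ₂
    (aux_integrable μ₂ (hf.comp (by fun_prop : Measurable fun b : G₂ => (g.1 * a, g.2 * b)))
      (fun b => hC _)) (fun b => hM _)
  have hFint : Integrable F μ₁ := aux_integrable μ₁ hFmeas hFbdd
  have hfg : f g = ∫ a, F a ∂μ₁ := by
    rw [hharm g, integral_prod (fun γ : G₁ × G₂ => f (g * γ))
      (aux_integrable _ (hf.comp (measurable_const.mul measurable_id)) (fun γ => hC _))]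
    rfl
  have hsplit : ∫ a, F a ∂μ₁ = ∫ a in A, F a ∂μ₁ + ∫ a in Aᶜ, F a ∂μ₁ :=
    (integral_add_compl hAm hFint).symm
  have hFA : ∫ a in A, F a ∂μ₁ = ε * F 1 := aux_hull μ₁ hFmeas
  have hF1 : F 1 = Sm μ₂ f g := by
    simp only [hF, mul_one]
    rfl
  have hcompl : ∫ a in Aᶜ, F a ∂μ₁ ≤ (1 - ε) * M := by
    have h1 : ∫ a in Aᶜ, F a ∂μ₁ ≤ ∫ _ in Aᶜ, M ∂μ₁ :=
      integral_mono hFint.restrict (integrable_const M) (fun a => hFle a)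
    have h2 : ∫ _ in Aᶜ, M ∂μ₁ = (μ₁ Aᶜ).toReal * M := by
      rw [setIntegral_const, smul_eq_mul]
      rfl
    have h3 : (μ₁ Aᶜ).toReal = 1 - ε := by
      rw [prob_compl_eq_one_sub hAm, ENNReal.toReal_sub_of_le prob_le_one ENNReal.one_ne_top]
      simp [hε]
    rw [h2, h3] at h1
    exact h1
  calc f g = ε * F 1 + ∫ a in Aᶜ, F a ∂μ₁ := by rw [hfg, hsplit, hFA]
    _ ≤ ε * Sm μ₂ f g + (1 - ε) * M := by rw [hF1]; exact add_le_add_right hcompl _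

end StepLemma
theorem main_real {G₁ G₂ : Type*} [Group G₁] [Group G₂]
    [MeasurableSpace G₁] [MeasurableSpace G₂]
    [MeasurableMul₂ G₁] [MeasurableMul₂ G₂]
    (μ₁ : Measure G₁) (μ₂ : Measure G₂)
    [IsProbabilityMeasure μ₁] [IsProbabilityMeasure μ₂]
    (he : 0 < μ₁ {(1 : G₁)})
    (u : G₁ × G₂ → ℝ) (hmeas : Measurable u) (C : ℝ) (hbdd : ∀ g, |u g| ≤ C)
    (hharm : ∀ g : G₁ × G₂, u g = ∫ γ, u (g * γ) ∂(μ₁.prod μ₂)) :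
    ∀ g : G₁ × G₂, u g ≤ Sm μ₂ u g := by
  set A := MeasureTheory.toMeasurable μ₁ {(1 : G₁)} with hA
  set ε := (μ₁ A).toReal with hε
  have hεpos : 0 < ε := by
    rw [hε, hA, measure_toMeasurable]
    exact ENNReal.toReal_pos he.ne' (measure_ne_top μ₁ _)
  -- iterates
  set k : ℕ → G₁ × G₂ → ℝ := fun n => (Sm μ₂)^[n] u with hk
  have hksucc : ∀ n, k (n + 1) = Sm μ₂ (k n) := fun n => by
    simp [hk, Function.iterate_succ_apply']
  have hkprop : ∀ n, Measurable (k n) ∧ (∀ g, |k n g| ≤ C) ∧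
      (∀ g : G₁ × G₂, k n g = ∫ γ, k n (g * γ) ∂(μ₁.prod μ₂)) := by
    intro n
    induction n with
    | zero => exact ⟨by simpa [hk] using hmeas, by simpa [hk] using hbdd,
        by simpa [hk] using hharm⟩
    | succ n ih =>
      rw [hksucc n]
      exact ⟨Sm_meas μ₂ ih.1, Sm_bdd μ₂ ih.2.1, Sm_harm μ₁ μ₂ ih.1 ih.2.1 ih.2.2⟩
  set d : ℕ → G₁ × G₂ → ℝ := fun n g => k n g - k (n + 1) g with hd
  have hdmeas : ∀ n, Measurable (d n) := fun n => ((hkprop n).1).sub ((hkprop (n + 1)).1)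
  have hdbdd : ∀ n g, |d n g| ≤ C + C := by
    intro n g
    have h1 := (hkprop n).2.1 g
    have h2 := (hkprop (n + 1)).2.1 g
    have := abs_sub (k n g) (k (n + 1) g)
    simp only [hd]
    linarith [abs_le.mp h1, abs_le.mp h2, abs_le.mpr (⟨(abs_le.mp h1).1, (abs_le.mp h1).2⟩ :
      -C ≤ k n g ∧ k n g ≤ C)]
  have hdharm : ∀ n, ∀ g : G₁ × G₂, d n g = ∫ γ, d n (g * γ) ∂(μ₁.prod μ₂) := by
    intro n g
    have h1 := (hkprop n).2.2 g
    have h2 := (hkprop (n + 1)).2.2 g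
    have hsub : ∫ γ, d n (g * γ) ∂(μ₁.prod μ₂)
        = (∫ γ, k n (g * γ) ∂(μ₁.prod μ₂)) - ∫ γ, k (n + 1) (g * γ) ∂(μ₁.prod μ₂) :=
      integral_sub
        (aux_integrable _ (((hkprop n).1).comp (measurable_const.mul measurable_id))
          (fun γ => (hkprop n).2.1 _))
        (aux_integrable _ (((hkprop (n + 1)).1).comp (measurable_const.mul measurable_id))
          (fun γ => (hkprop (n + 1)).2.1 _))
    rw [hsub, ← h1, ← h2]
  have hdS : ∀ n g, Sm μ₂ (d n) g = d (n + 1) g := by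
    intro n g
    have h := Sm_sub μ₂ (hkprop n).1 (hkprop (n + 1)).1 (hkprop n).2.1 (hkprop (n + 1)).2.1 g
    rw [← hksucc n, ← hksucc (n + 1)] at h
    exact h
  -- the sup
  set M := sSup (Set.range (d 0)) with hM
  have hrne : (Set.range (d 0)).Nonempty := ⟨d 0 1, 1, rfl⟩
  have hbdda : BddAbove (Set.range (d 0)) := by
    refine ⟨C + C, ?_⟩
    rintro y ⟨g, rfl⟩
    exact (abs_le.mp (hdbdd 0 g)).2
  have hMle : ∀ n g, d n g ≤ M := by
    intro n
    induction n with
    | zero => exact fun g => le_csSup hbdda ⟨g, rfl⟩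
    | succ n ih =>
      intro g
      rw [← hdS n g]
      exact Sm_le μ₂ (hdmeas n) (hdbdd n) ih g
  -- main estimate
  have hNM : ∀ N : ℕ, (N : ℝ) * M ≤ C + C := by
    intro N
    set K := ∑ n ∈ Finset.range N, (1 / ε) ^ n with hK
    have hKnn : 0 ≤ K := Finset.sum_nonneg fun n _ => pow_nonneg (by positivity) n
    refine le_of_forall_pos_le_add ?_
    intro δ hδ
    set δ' := δ / (K + 1) with hδ'
    have hδ'pos : 0 < δ' := div_pos hδ (by linarith)
    obtain ⟨y, ⟨g, rfl⟩, hy⟩ := exists_lt_of_lt_csSup hrne (show M - δ' < M by linarith)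
    have hchain : ∀ n, M - δ' * (1 / ε) ^ n ≤ d n g := by
      intro n
      induction n with
      | zero => simpa using hy.le
      | succ n ih =>
        have hstep := step_ineq μ₁ μ₂ (hdmeas n) (hdbdd n) (hMle n) (hdharm n) g
        rw [← hA, ← hε, hdS n g] at hstep
        have hεn : (0 : ℝ) < (1 / ε) ^ n := by positivity
        have hpow : ε * (1 / ε) ^ (n + 1) = (1 / ε) ^ n := by
          rw [pow_succ]
          field_simp
        have h3 : ε * (M - δ' * (1 / ε) ^ (n + 1)) ≤ ε * d (n + 1) g := by
          have hexp : ε * (M - δ' * (1 / ε) ^ (n + 1)) = ε * M - δ' * (1 / ε) ^ n := by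
            rw [mul_sub]
            congr 1
            rw [← hpow]
            ring
          rw [hexp]
          nlinarith [le_trans ih hstep]
        exact le_of_mul_le_mul_left h3 hεpos
    have hsum : ∑ n ∈ Finset.range N, d n g = k 0 g - k N g := by
      simpa [hd] using Finset.sum_range_sub' (fun n => k n g) N
    have hub : ∑ n ∈ Finset.range N, d n g ≤ C + C := by
      rw [hsum]
      have h1 := abs_le.mp ((hkprop 0).2.1 g)
      have h2 := abs_le.mp ((hkprop N).2.1 g)
      linarith
    have hlb : (N : ℝ) * M - δ' * K ≤ ∑ n ∈ Finset.range N, d n g := by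
      have h := Finset.sum_le_sum (s := Finset.range N)
        (f := fun n => M - δ' * (1 / ε) ^ n) (g := fun n => d n g) (fun n _ => hchain n)
      have h2 : ∑ n ∈ Finset.range N, (M - δ' * (1 / ε) ^ n)
          = (N : ℝ) * M - δ' * K := by
        rw [Finset.sum_sub_distrib, Finset.sum_const, Finset.card_range, ← Finset.mul_sum,
          nsmul_eq_mul, hK]
      linarith
    have hδ'K : δ' * K ≤ δ := by
      rw [hδ', div_mul_eq_mul_div, div_le_iff₀ (by linarith : (0:ℝ) < K + 1)]
      nlinarith
    linarith
  have hM0 : M ≤ 0 := by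
    by_contra hpos
    push_neg at hpos
    obtain ⟨N, hN⟩ := exists_nat_gt ((C + C) / M)
    have h2 : C + C < (N : ℝ) * M := by
      rw [div_lt_iff₀ hpos] at hN
      linarith
    linarith [hNM N]
  intro g
  have h1 : d 0 g ≤ M := hMle 0 g
  have hk0 : k 0 g = u g := by simp [hk]
  have hk1 : k 1 g = Sm μ₂ u g := by
    rw [hksucc 0]
    simp [hk]
  simp only [hd] at h1
  rw [hk0, hk1] at h1
  linarith
lemma aux_integrableC {α : Type*} [MeasurableSpace α] (μ : Measure α) [IsFiniteMeasure μ]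
    {f : α → ℂ} (hf : Measurable f) {C : ℝ} (hC : ∀ x, ‖f x‖ ≤ C) : Integrable f μ :=
  (integrable_const C).mono' hf.aestronglyMeasurable (Eventually.of_forall hC)

/-- if `μ₁({e}) > 0`, a bounded `(μ₁ × μ₂)`-harmonic function on `G₁ × G₂`
restricts, in each first coordinate, to a `μ₂`-harmonic function on `G₂`. -/
theorem stmt10 {G₁ G₂ : Type*} [Group G₁] [Group G₂]
    [MeasurableSpace G₁] [MeasurableSpace G₂]
    [MeasurableMul₂ G₁] [MeasurableMul₂ G₂]
    (μ₁ : Measure G₁) (μ₂ : Measure G₂)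
    [IsProbabilityMeasure μ₁] [IsProbabilityMeasure μ₂]
    (he : 0 < μ₁ {(1 : G₁)})
    (h : G₁ × G₂ → ℂ) (hmeas : Measurable h) (hbdd : ∃ C, ∀ g, ‖h g‖ ≤ C)
    (hharm : ∀ g : G₁ × G₂, h g = ∫ γ, h (g * γ) ∂(μ₁.prod μ₂)) :
    ∀ (g₁ : G₁) (γ : G₂), h (g₁, γ) = ∫ b, h (g₁, γ * b) ∂μ₂ := by
  obtain ⟨C, hC⟩ := hbdd
  have hint : ∀ g : G₁ × G₂, Integrable (fun γ => h (g * γ)) (μ₁.prod μ₂) := fun g =>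
    aux_integrableC _ (hmeas.comp (measurable_const.mul measurable_id)) (fun γ => hC _)
  -- harmonicity of real and imaginary parts
  have hure : ∀ g : G₁ × G₂, (h g).re = ∫ γ, (h (g * γ)).re ∂(μ₁.prod μ₂) := by
    intro g
    rw [hharm g]
    simpa using (integral_re (hint g)).symm
  have huim : ∀ g : G₁ × G₂, (h g).im = ∫ γ, (h (g * γ)).im ∂(μ₁.prod μ₂) := by
    intro g
    rw [hharm g]
    simpa using (integral_im (hint g)).symm
  have hnre : ∀ g : G₁ × G₂, -(h g).re = ∫ γ, -(h (g * γ)).re ∂(μ₁.prod μ₂) := by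
    intro g
    rw [integral_neg, ← hure g]
  have hnim : ∀ g : G₁ × G₂, -(h g).im = ∫ γ, -(h (g * γ)).im ∂(μ₁.prod μ₂) := by
    intro g
    rw [integral_neg, ← huim g]
  have hCre : ∀ g, |(h g).re| ≤ C := fun g =>
    le_trans (Complex.abs_re_le_norm _) (by simpa using hC g)
  have hCim : ∀ g, |(h g).im| ≤ C := fun g =>
    le_trans (Complex.abs_im_le_norm _) (by simpa using hC g)
  have hmre : Measurable fun g : G₁ × G₂ => (h g).re := Complex.measurable_re.comp hmeas
  have hmim : Measurable fun g : G₁ × G₂ => (h g).im := Complex.measurable_im.comp hmeas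
  have h1 := main_real μ₁ μ₂ he (fun g => (h g).re) hmre C hCre hure
  have h2 := main_real μ₁ μ₂ he (fun g => -(h g).re) hmre.neg C
    (fun g => by simpa using hCre g) hnre
  have h3 := main_real μ₁ μ₂ he (fun g => (h g).im) hmim C hCim huim
  have h4 := main_real μ₁ μ₂ he (fun g => -(h g).im) hmim.neg C
    (fun g => by simpa using hCim g) hnim
  -- turn inequalities into equalities
  have hSneg : ∀ (f : G₁ × G₂ → ℝ) (g : G₁ × G₂),
      Sm μ₂ (fun x => -(f x)) g = -(Sm μ₂ f g) := fun f g => integral_neg _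
  have hre_eq : ∀ g : G₁ × G₂, (h g).re = Sm μ₂ (fun x => (h x).re) g := by
    intro g
    have := h2 g
    rw [hSneg (fun x => (h x).re) g] at this
    have h' : -(h g).re ≤ -Sm μ₂ (fun x => (h x).re) g := this
    exact le_antisymm (h1 g) (by linarith)
  have him_eq : ∀ g : G₁ × G₂, (h g).im = Sm μ₂ (fun x => (h x).im) g := by
    intro g
    have := h4 g
    rw [hSneg (fun x => (h x).im) g] at this
    have h' : -(h g).im ≤ -Sm μ₂ (fun x => (h x).im) g := this
    exact le_antisymm (h3 g) (by linarith)
  intro g₁ γ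
  have hintb : Integrable (fun b => h (g₁, γ * b)) μ₂ :=
    aux_integrableC _ (hmeas.comp (by fun_prop : Measurable fun b : G₂ => (g₁, γ * b)))
      (fun b => hC _)
  apply Complex.ext
  · have e1 : (∫ b, h (g₁, γ * b) ∂μ₂).re = ∫ b, (h (g₁, γ * b)).re ∂μ₂ := by
      simpa using (integral_re hintb).symm
    rw [e1]
    exact hre_eq (g₁, γ)
  · have e2 : (∫ b, h (g₁, γ * b) ∂μ₂).im = ∫ b, (h (g₁, γ * b)).im ∂μ₂ := by
      simpa using (integral_im hintb).symm
    rw [e2]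
    exact him_eq (g₁, γ)
end
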